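/- arXiv:2108.00245 — 3 statements merged into one kernel-verified Lean document; each statement's English description precedes it below -/
import Mathlib

section
/- Let (G,T) be a bipartite graft with color classes A and B, let F be a minimum join of (G,T), and let X ⊆ A be a maximal bipartitic extreme set. Let (Ĝ, T̂) be a graft with V(Ĝ) ⊇ V(G), E(Ĝ) ⊇ E(G), T̂ = T, such that every edge of E(Ĝ)∖E(G) joins a vertex of X to a vertex of V(Ĝ)∖V(G). Then a set of edges is a minimum join of (Ĝ,T̂) if and only if it is a minimum join of (G,T). -/
open scoped Classical

variable {V : Type*}

/-- The `F`-weight of a walk: number of edges outside `F` minus number of edges in `F`. -/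
noncomputable def walkWeight {G : SimpleGraph V} (F : Set (Sym2 V)) {x y : V}
    (p : G.Walk x y) : ℤ :=
  ((p.edges.filter fun e => e ∉ F).length : ℤ) -
    ((p.edges.filter fun e => e ∈ F).length : ℤ)

/-- The `F`-distance between `x` and `y`: the minimum `F`-weight of a path between them. -/
noncomputable def distF (G : SimpleGraph V) (F : Set (Sym2 V)) (x y : V) : ℤ :=
  sInf {w : ℤ | ∃ p : G.Walk x y, p.IsPath ∧ walkWeight F p = w}

/-- `F` is a join of the graft `(G, T)`. -/
def IsJoin (G : SimpleGraph V) (T : Set V) (F : Set (Sym2 V)) : Prop :=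
  F ⊆ G.edgeSet ∧ ∀ v : V, v ∈ T ↔ Odd {e ∈ F | v ∈ e}.ncard

/-- `F` is a minimum join of the graft `(G, T)`. -/
def IsMinJoin (G : SimpleGraph V) (T : Set V) (F : Set (Sym2 V)) : Prop :=
  IsJoin G T F ∧ ∀ F' : Set (Sym2 V), IsJoin G T F' → F.ncard ≤ F'.ncard

/-- `(G, T)` is a graft: every connected component contains an even number of vertices of `T`. -/
def IsGraft (G : SimpleGraph V) (T : Set V) : Prop :=
  ∀ v : V, Even {u | u ∈ T ∧ G.Reachable v u}.ncard

/-- `X` is an extreme set: `d_F(x, y) ≥ 0` for all `x, y ∈ X`. -/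
def IsExtremeSet (G : SimpleGraph V) (F : Set (Sym2 V)) (X : Set V) : Prop :=
  ∀ x ∈ X, ∀ y ∈ X, 0 ≤ distF G F x y

/-- `G` is bipartite with vertex set `Vset` and color classes `A`, `B`. -/
def IsBipartitionOn (G : SimpleGraph V) (Vset A B : Set V) : Prop :=
  A ∪ B = Vset ∧ Disjoint A B ∧
    ∀ v w : V, G.Adj v w → (v ∈ A ∧ w ∈ B) ∨ (v ∈ B ∧ w ∈ A)

/-- `X` is a maximal bipartitic extreme set with respect to color classes `A`, `B`. -/
def MaxBipExtreme (G : SimpleGraph V) (F : Set (Sym2 V)) (A B X : Set V) : Prop :=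
  IsExtremeSet G F X ∧ (X ⊆ A ∨ X ⊆ B) ∧
    ∀ X' : Set V, IsExtremeSet G F X' → (X' ⊆ A ∨ X' ⊆ B) → X ⊆ X' → X' = X

/-- `D_X`: the vertices of `Vset ∖ X` at negative `F`-distance from `X`. -/
def Dset (G : SimpleGraph V) (F : Set (Sym2 V)) (Vset X : Set V) : Set V :=
  {y | y ∈ Vset ∧ y ∉ X ∧ ∃ x ∈ X, distF G F x y < 0}

/-- `C_X = Vset ∖ X ∖ D_X`. -/
def Cset (G : SimpleGraph V) (F : Set (Sym2 V)) (Vset X : Set V) : Set V :=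
  (Vset \ X) \ Dset G F Vset X

/-- `min_{x ∈ X} d_F(x, y)`. -/
noncomputable def minDistX (G : SimpleGraph V) (F : Set (Sym2 V)) (X : Set V) (y : V) : ℤ :=
  sInf {d : ℤ | ∃ x ∈ X, distF G F x y = d}

/-- The graph `G − S` obtained by deleting the vertices of `S`. -/
def gDelete (G : SimpleGraph V) (S : Set V) : SimpleGraph V where
  Adj v w := G.Adj v w ∧ v ∉ S ∧ w ∉ S
  symm := ⟨fun v w ⟨h, hv, hw⟩ => ⟨h.symm, hw, hv⟩⟩
  loopless := ⟨fun v h => G.loopless.irrefl v h.1⟩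

/-- The subgraph of `G` induced by `S`. -/
def gRestrict (G : SimpleGraph V) (S : Set V) : SimpleGraph V where
  Adj v w := G.Adj v w ∧ v ∈ S ∧ w ∈ S
  symm := ⟨fun v w ⟨h, hv, hw⟩ => ⟨h.symm, hw, hv⟩⟩
  loopless := ⟨fun v h => G.loopless.irrefl v h.1⟩

/-- `C` is (the vertex set of) a connected component of `G − X`. -/
def IsCompOf (G : SimpleGraph V) (X C : Set V) : Prop :=
  ∃ v, v ∉ X ∧ C = {u | (gDelete G X).Reachable v u}

/-- `δ_G(C)`: the edges of `G` with exactly one end in `C`. -/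
def edgeBoundary (G : SimpleGraph V) (C : Set V) : Set (Sym2 V) :=
  {e | e ∈ G.edgeSet ∧ ∃ u v : V, e = s(u, v) ∧ u ∈ C ∧ v ∉ C}

/-- `X` is an `F`-combic set of the graft `(G, T)`. -/
def IsCombic (G : SimpleGraph V) (T : Set V) (F : Set (Sym2 V)) (X : Set V) : Prop :=
  (∀ u v : V, s(u, v) ∈ F → ¬(u ∈ X ∧ v ∈ X)) ∧
  (∀ C : Set V, IsCompOf G X C → Odd (C ∩ T).ncard →
      (edgeBoundary G C ∩ F).ncard = 1) ∧
  (∀ C : Set V, IsCompOf G X C → Even (C ∩ T).ncard →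
      edgeBoundary G C ∩ F = ∅)

/-- The rootlization of `G` by the mount `X`, root `r` and attachment `s`. -/
def rootlize (G : SimpleGraph V) (X : Set V) (r s : V) : SimpleGraph V :=
  SimpleGraph.fromRel fun v w => G.Adj v w ∨ (v = r ∧ w = s) ∨ (v = s ∧ w ∈ X)

/-- The initial component of `r`: the connected component of `r` in the subgraph
induced by the vertices at nonpositive `F`-distance from `r`. -/
def initComp (G : SimpleGraph V) (F : Set (Sym2 V)) (r : V) : Set V :=
  {x | (gRestrict G {y | distF G F r y ≤ 0}).Reachable r x}

section Stmt9Aux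

variable {α : Type*}

/-- Edges of `F` incident to `v`. -/
def dS {V : Type*} (F : Set (Sym2 V)) (v : V) : Set (Sym2 V) := {e ∈ F | v ∈ e}

lemma aux_ncard_split [Finite α] (s t : Set α) :
    s.ncard = (s \ t).ncard + (s ∩ t).ncard := by
  rw [← Set.ncard_union_eq (by rw [Set.disjoint_left]; rintro a ⟨-, ha⟩ ⟨-, hb⟩; exact ha hb)
      (Set.toFinite _) (Set.toFinite _), Set.diff_union_inter]

lemma aux_ncard_sd (s t : Set α) [Finite α] :
    ((s \ t) ∪ (t \ s)).ncard + 2 * (s ∩ t).ncard = s.ncard + t.ncard := by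
  rw [Set.ncard_union_eq (by rw [Set.disjoint_left]; rintro a ⟨-, ha⟩ ⟨hb, -⟩; exact ha hb)
      (Set.toFinite _) (Set.toFinite _)]
  have h1 := aux_ncard_split s t
  have h2 := aux_ncard_split t s
  rw [Set.inter_comm t s] at h2
  omega

variable {V : Type*}

lemma dS_union (A B : Set (Sym2 V)) (v : V) : dS (A ∪ B) v = dS A v ∪ dS B v := by
  ext e; simp only [dS, Set.mem_setOf_eq, Set.mem_union]; tauto

lemma dS_diff (A B : Set (Sym2 V)) (v : V) : dS (A \ B) v = dS A v \ dS B v := by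
  ext e; simp only [dS, Set.mem_setOf_eq, Set.mem_diff]; tauto

lemma dS_inter (A B : Set (Sym2 V)) (v : V) : dS (A ∩ B) v = dS A v ∩ dS B v := by
  ext e; simp only [dS, Set.mem_setOf_eq, Set.mem_inter_iff]; tauto

lemma dS_sd_parity [Finite V] (A B : Set (Sym2 V)) (v : V) :
    (dS ((A \ B) ∪ (B \ A)) v).ncard + 2 * (dS (A ∩ B) v).ncard
      = (dS A v).ncard + (dS B v).ncard := by
  rw [dS_union, dS_diff, dS_diff, dS_inter]
  exact aux_ncard_sd _ _

end Stmt9Aux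

section Stmt9Aux2

variable {α : Type*} {V : Type*}

lemma aux_ncard_filter_of_nodup (P : α → Prop) (l : List α) (hl : l.Nodup) :
    {a | a ∈ l ∧ P a}.ncard = (l.filter fun a => P a).length := by
  classical
  have h : {a | a ∈ l ∧ P a} = ↑(l.filter fun a => P a).toFinset := by
    ext a
    simp [List.mem_filter]
  rw [h, Set.ncard_coe_finset, List.toFinset_card_of_nodup (hl.filter _)]

lemma walkWeight_eq {G : SimpleGraph V} (F : Set (Sym2 V)) {x y : V} (p : G.Walk x y)
    (hp : p.edges.Nodup) :
    walkWeight F p =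
      (({e | e ∈ p.edges} \ F).ncard : ℤ) - (({e | e ∈ p.edges} ∩ F).ncard : ℤ) := by
  classical
  have h1 : {e | e ∈ p.edges} \ F = {e | e ∈ p.edges ∧ e ∉ F} := rfl
  have h2 : {e | e ∈ p.edges} ∩ F = {e | e ∈ p.edges ∧ e ∈ F} := rfl
  rw [walkWeight, h1, h2, aux_ncard_filter_of_nodup (fun e => e ∉ F) _ hp,
    aux_ncard_filter_of_nodup (fun e => e ∈ F) _ hp]
  have hcongr : ∀ (l : List (Sym2 V)) (P1 P2 : Sym2 V → Bool), (∀ a, P1 a = P2 a) →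
      (l.filter P1).length = (l.filter P2).length := by
    intro l P1 P2 h
    rw [show P1 = P2 from funext h]
  congr 2
  apply hcongr
  intro a
  rw [decide_eq_decide]

lemma distF_le_walkWeight [Fintype V] (G : SimpleGraph V) (F : Set (Sym2 V)) {x y : V}
    (p : G.Walk x y) (hp : p.IsPath) : distF G F x y ≤ walkWeight F p := by
  refine csInf_le ⟨-(Fintype.card (Sym2 V) : ℤ), ?_⟩ ⟨p, hp, rfl⟩
  rintro w ⟨q, hq, rfl⟩
  have h1 : (q.edges.filter fun e => e ∈ F).length ≤ Fintype.card (Sym2 V) :=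
    le_trans (List.length_filter_le _ _) hq.isTrail.edges_nodup.length_le_card
  rw [walkWeight]
  omega

end Stmt9Aux2

section Stmt9Aux3

variable {V : Type*}

lemma dS_ncard_eq_degree [Fintype V] (H : SimpleGraph V) (v : V) :
    (dS H.edgeSet v).ncard = H.degree v := by
  classical
  have h : dS H.edgeSet v = H.incidenceSet v := rfl
  rw [h, ← Nat.card_coe_set_eq, Nat.card_eq_fintype_card,
    SimpleGraph.card_incidenceSet_eq_degree]

lemma exists_path_odd [Fintype V] (G : SimpleGraph V) (D : Set (Sym2 V))
    (hD : D ⊆ G.edgeSet) {x : V} (hx : Odd (dS D x).ncard) :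
    ∃ x' : V, x' ≠ x ∧ Odd (dS D x').ncard ∧
      ∃ p : G.Walk x x', p.IsPath ∧ ∀ e ∈ p.edges, e ∈ D := by
  classical
  set H : SimpleGraph V := SimpleGraph.fromEdgeSet D with hH
  have hHe : H.edgeSet = D := by
    rw [hH, SimpleGraph.edgeSet_fromEdgeSet]
    ext e
    simp only [Set.mem_diff, Set.mem_setOf_eq, and_iff_left_iff_imp]
    intro he hdiag
    exact (G.not_isDiag_of_mem_edgeSet (hD he)) hdiag
  set comp : Set V := {u | H.Reachable x u} with hcomp
  set H' : SimpleGraph V := gRestrict H comp with hH'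
  have hcl : ∀ {a b : V}, a ∈ comp → H.Adj a b → b ∈ comp := by
    intro a b ha hab
    exact SimpleGraph.Reachable.trans ha hab.reachable
  have hdeg : ∀ v ∈ comp, H'.degree v = (dS D v).ncard := by
    intro v hv
    have hset : H'.neighborSet v = H.neighborSet v := by
      ext w
      simp only [SimpleGraph.mem_neighborSet]
      constructor
      · rintro ⟨h, -, -⟩; exact h
      · intro h; exact ⟨h, hv, hcl hv h⟩
    have h1 : H'.degree v = H.degree v := by
      rw [← SimpleGraph.card_neighborSet_eq_degree, ← SimpleGraph.card_neighborSet_eq_degree,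
        ← Nat.card_eq_fintype_card, ← Nat.card_eq_fintype_card, hset]
    rw [h1]
    have h2 := dS_ncard_eq_degree H v
    rw [hHe] at h2
    convert h2.symm
  have hxc : x ∈ comp := SimpleGraph.Reachable.refl x
  have hx' : Odd (H'.degree x) := by rw [hdeg x hxc]; exact hx
  obtain ⟨w, hwne, hwodd⟩ : ∃ w, w ≠ x ∧ Odd (H'.degree w) := by
    obtain ⟨k, hk⟩ := H'.odd_card_odd_degree_vertices_ne x hx'
    have hpos : 0 < ({w | w ≠ x ∧ Odd (H'.degree w)} : Finset V).card := by omega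
    obtain ⟨w, hw⟩ := Finset.card_pos.mp hpos
    simp only [Finset.mem_filter, Finset.mem_univ, true_and] at hw
    exact ⟨w, hw.1, hw.2⟩
  have hwc : w ∈ comp := by
    have hdpos : 0 < H'.degree w := hwodd.pos
    obtain ⟨u, hu⟩ := (H'.degree_pos_iff_exists_adj w).mp hdpos
    exact hu.2.1
  refine ⟨w, hwne, by rw [← hdeg w hwc]; exact hwodd, ?_⟩
  have hreach : H.Reachable x w := hwc
  refine hreach.elim fun q0 => ?_
  have hqpath := q0.bypass_isPath
  have hqedges : ∀ e ∈ q0.bypass.edges, e ∈ D := by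
    intro e he
    rw [← hHe]
    exact q0.bypass.edges_subset_edgeSet he
  have hGe : ∀ e ∈ q0.bypass.edges, e ∈ G.edgeSet := fun e he => hD (hqedges e he)
  refine ⟨q0.bypass.transfer G hGe, hqpath.transfer hGe, ?_⟩
  intro e he
  rw [SimpleGraph.Walk.edges_transfer] at he
  exact hqedges e he

lemma odd_dS_path {G : SimpleGraph V} {x y : V} {p : G.Walk x y} (hp : p.IsPath)
    (hxy : x ≠ y) (v : V) :
    (Odd (dS {e | e ∈ p.edges} v).ncard ↔ (v = x ∨ v = y)) := by
  classical
  have h1 : (dS {e | e ∈ p.edges} v).ncard = p.edges.countP (fun e => v ∈ e) := by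
    rw [List.countP_eq_length_filter]
    have := aux_ncard_filter_of_nodup (fun e : Sym2 V => v ∈ e) p.edges hp.isTrail.edges_nodup
    rw [show dS {e | e ∈ p.edges} v = {a | a ∈ p.edges ∧ v ∈ a} from rfl, this]
    apply congrArg List.length
    apply List.filter_congr
    intro a _
    rw [decide_eq_decide]
  rw [h1, ← Nat.not_even_iff_odd, hp.isTrail.even_countP_edges_iff v]
  constructor
  · intro h
    by_contra hc
    push_neg at hc
    exact h fun _ => ⟨hc.1, hc.2⟩
  · rintro (rfl | rfl) h
    · exact (h hxy).1 rfl
    · exact (h hxy).2 rfl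

end Stmt9Aux3

section Stmt9Aux4

variable {V : Type*}

lemma isJoin_sd [Fintype V] {G : SimpleGraph V} {T : Set V} {F C : Set (Sym2 V)}
    (hF : IsJoin G T F) (hC : C ⊆ G.edgeSet) (hCeven : ∀ v, Even (dS C v).ncard) :
    IsJoin G T ((F \ C) ∪ (C \ F)) := by
  constructor
  · rintro e (⟨h, -⟩ | ⟨h, -⟩)
    exacts [hF.1 h, hC h]
  · intro v
    have key := dS_sd_parity F C v
    have hc := hCeven v
    have h2 := hF.2 v
    have h3 : dS ((F \ C) ∪ (C \ F)) v = {e ∈ (F \ C) ∪ (C \ F) | v ∈ e} := rfl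
    have h4 : dS F v = {e ∈ F | v ∈ e} := rfl
    rw [← h3]
    rw [← h4] at h2
    rw [h2, Nat.odd_iff, Nat.odd_iff]
    rw [Nat.even_iff] at hc
    omega

lemma core_ineq [Fintype V] {G : SimpleGraph V} {T X : Set V} {F : Set (Sym2 V)}
    (hF : IsMinJoin G T F) (hX : IsExtremeSet G F X) :
    ∀ (n : ℕ) (D : Set (Sym2 V)), D.ncard ≤ n → D ⊆ G.edgeSet →
      (∀ v, Odd (dS D v).ncard → v ∈ X) →
      (D ∩ F).ncard ≤ (D \ F).ncard := by
  intro n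
  induction n with
  | zero =>
    intro D hDn _ _
    have : D = ∅ := by
      rw [← Set.ncard_eq_zero (Set.toFinite D)]; omega
    simp [this]
  | succ n ih =>
    intro D hDn hDG hodd
    rcases Set.eq_empty_or_nonempty D with rfl | hDne
    · simp
    by_cases hS : ∃ z, Odd (dS D z).ncard
    · -- there is a vertex of odd degree
      obtain ⟨z, hz⟩ := hS
      obtain ⟨z', hz'ne, hz'odd, p, hp, hpD⟩ := exists_path_odd G D hDG hz
      set Dp : Set (Sym2 V) := {e | e ∈ p.edges} with hDp
      have hDpD : Dp ⊆ D := fun e he => hpD e he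
      have hzX : z ∈ X := hodd z hz
      have hz'X : z' ∈ X := hodd z' hz'odd
      have h0 : (0 : ℤ) ≤ walkWeight F p :=
        le_trans (hX z hzX z' hz'X) (distF_le_walkWeight G F p hp)
      rw [walkWeight_eq F p hp.isTrail.edges_nodup] at h0
      have hW : (Dp ∩ F).ncard ≤ (Dp \ F).ncard := by
        rw [← hDp] at h0; omega
      -- Dp is nonempty
      have hDpz : Odd (dS Dp z).ncard := (odd_dS_path hp hz'ne.symm z).mpr (Or.inl rfl)
      have hDpne : Dp.Nonempty := by
        obtain ⟨e, he⟩ := (Set.ncard_pos (Set.toFinite _)).mp hDpz.pos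
        exact ⟨e, he.1⟩
      have hlt : (D \ Dp).ncard ≤ n := by
        have : (D \ Dp).ncard < D.ncard := by
          apply Set.ncard_lt_ncard _ (Set.toFinite D)
          obtain ⟨e, he⟩ := hDpne
          exact ⟨Set.diff_subset, fun hsub => (hsub (hDpD he)).2 he⟩
        omega
      have hsplit : ∀ v, (dS D v).ncard = (dS (D \ Dp) v).ncard + (dS Dp v).ncard := by
        intro v
        have h1 : dS D v = dS (D \ Dp) v ∪ dS Dp v := by
          rw [← dS_union, Set.diff_union_of_subset hDpD]
        rw [h1, Set.ncard_union_eq _ (Set.toFinite _) (Set.toFinite _)]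
        rw [dS_diff, Set.disjoint_left]
        rintro e ⟨-, hee⟩ he
        exact hee he
      have hodd' : ∀ v, Odd (dS (D \ Dp) v).ncard → v ∈ X := by
        intro v hv
        by_cases hvp : Odd (dS Dp v).ncard
        · rcases (odd_dS_path hp hz'ne.symm v).mp hvp with rfl | rfl
          exacts [hzX, hz'X]
        · apply hodd v
          have := hsplit v
          rw [Nat.odd_iff] at hv ⊢
          rw [Nat.odd_iff] at hvp
          omega
      have hIH := ih (D \ Dp) hlt (Set.diff_subset.trans hDG) hodd'
      have hs1 : (D ∩ F).ncard = ((D \ Dp) ∩ F).ncard + (Dp ∩ F).ncard := by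
        rw [← Set.ncard_union_eq _ (Set.toFinite _) (Set.toFinite _)]
        · congr 1
          ext e
          constructor
          · rintro ⟨he, hf⟩
            by_cases hep : e ∈ Dp
            · exact Or.inr ⟨hep, hf⟩
            · exact Or.inl ⟨⟨he, hep⟩, hf⟩
          · rintro (⟨⟨he, -⟩, hf⟩ | ⟨he, hf⟩)
            exacts [⟨he, hf⟩, ⟨hDpD he, hf⟩]
        · rw [Set.disjoint_left]
          rintro e ⟨⟨-, hee⟩, -⟩ ⟨he, -⟩
          exact hee he
      have hs2 : (D \ F).ncard = ((D \ Dp) \ F).ncard + (Dp \ F).ncard := by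
        rw [← Set.ncard_union_eq _ (Set.toFinite _) (Set.toFinite _)]
        · congr 1
          ext e
          constructor
          · rintro ⟨he, hf⟩
            by_cases hep : e ∈ Dp
            · exact Or.inr ⟨hep, hf⟩
            · exact Or.inl ⟨⟨he, hep⟩, hf⟩
          · rintro (⟨⟨he, -⟩, hf⟩ | ⟨he, hf⟩)
            exacts [⟨he, hf⟩, ⟨hDpD he, hf⟩]
        · rw [Set.disjoint_left]
          rintro e ⟨⟨-, hee⟩, -⟩ ⟨he, -⟩
          exact hee he
      omega
    · -- all degrees even
      push_neg at hS
      obtain ⟨e, he⟩ := hDne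
      have heG : e ∈ G.edgeSet := hDG he
      induction e using Sym2.ind with
      | _ a b =>
      have hab : G.Adj a b := heG
      have habne : a ≠ b := hab.ne
      set D' : Set (Sym2 V) := D \ {s(a, b)} with hD'
      have hD'sub : D' ⊆ G.edgeSet := Set.diff_subset.trans hDG
      have ha_odd : Odd (dS D' a).ncard := by
        have h1 : dS D' a = dS D a \ {s(a, b)} := by
          ext f
          simp only [dS, hD', Set.mem_setOf_eq, Set.mem_diff, Set.mem_singleton_iff]
          tauto
        have h2 : s(a, b) ∈ dS D a := ⟨he, by simp⟩
        have h3 : (dS D' a).ncard = (dS D a).ncard - 1 := by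
          rw [h1, Set.ncard_diff_singleton_of_mem h2]
        have h4 : 0 < (dS D a).ncard := (Set.ncard_pos (Set.toFinite _)).mpr ⟨_, h2⟩
        have h5 := hS a
        rw [Nat.not_odd_iff_even, Nat.even_iff] at h5
        rw [Nat.odd_iff]
        omega
      obtain ⟨w, hwne, hwodd, p, hp, hpD'⟩ := exists_path_odd G D' hD'sub ha_odd
      have hwb : w = b := by
        by_contra hne
        have hwe : w ∉ (s(a, b) : Sym2 V) := by
          rw [Sym2.mem_iff]
          push_neg
          exact ⟨hwne, hne⟩
        have heq : dS D' w = dS D w := by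
          ext f
          simp only [dS, hD', Set.mem_setOf_eq, Set.mem_diff, Set.mem_singleton_iff]
          constructor
          · rintro ⟨⟨h1, -⟩, h2⟩; exact ⟨h1, h2⟩
          · rintro ⟨h1, h2⟩
            refine ⟨⟨h1, ?_⟩, h2⟩
            rintro rfl
            exact hwe h2
        rw [heq] at hwodd
        exact hS w hwodd
      subst hwb
      set Dp : Set (Sym2 V) := {f | f ∈ p.edges} with hDp
      have hDpD' : Dp ⊆ D' := fun f hf => hpD' f hf
      have heDp : s(a, w) ∉ Dp := fun hf => (hDpD' hf).2 rfl
      set C : Set (Sym2 V) := Dp ∪ {s(a, w)} with hC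
      have hCD : C ⊆ D := by
        rintro f (hf | hf)
        · exact (hDpD' hf).1
        · rw [hf]; exact he
      have hCsplit : ∀ v, (dS C v).ncard = (dS Dp v).ncard + (dS {s(a, w)} v).ncard := by
        intro v
        rw [hC, dS_union, Set.ncard_union_eq _ (Set.toFinite _) (Set.toFinite _)]
        rw [Set.disjoint_left]
        rintro f ⟨hf, -⟩ ⟨hf2, -⟩
        rw [Set.mem_singleton_iff] at hf2
        subst hf2
        exact heDp hf
      have hsingle : ∀ v, (dS {s(a, w)} v).ncard = if v ∈ (s(a, w) : Sym2 V) then 1 else 0 := by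
        intro v
        split_ifs with h
        · have : dS {s(a, w)} v = {s(a, w)} := by
            ext f
            simp only [dS, Set.mem_setOf_eq, Set.mem_singleton_iff]
            constructor
            · rintro ⟨h1, -⟩; exact h1
            · rintro rfl; exact ⟨rfl, h⟩
          rw [this, Set.ncard_singleton]
        · have : dS {s(a, w)} v = ∅ := by
            ext f
            simp only [dS, Set.mem_setOf_eq, Set.mem_singleton_iff, Set.mem_empty_iff_false,
              iff_false, not_and]
            rintro rfl
            exact h
          rw [this, Set.ncard_empty]
      have hCeven : ∀ v, Even (dS C v).ncard := by
        intro v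
        rw [hCsplit v, hsingle v]
        by_cases hv : v ∈ (s(a, w) : Sym2 V)
        · have hvp : Odd (dS Dp v).ncard := by
            apply (odd_dS_path hp habne v).mpr
            rw [Sym2.mem_iff] at hv
            exact hv
          rw [if_pos hv]
          rw [Nat.odd_iff] at hvp
          rw [Nat.even_iff]
          omega
        · have hvp : ¬ Odd (dS Dp v).ncard := by
            intro hcon
            rcases (odd_dS_path hp habne v).mp hcon with rfl | rfl
            · exact hv (by simp)
            · exact hv (by simp)
          rw [if_neg hv]
          rw [Nat.not_odd_iff_even] at hvp
          rw [Nat.even_iff] at hvp ⊢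
          omega
      -- F Δ C is a join, so by minimality w_F(C) ≥ 0
      have hjoin := isJoin_sd hF.1 (hCD.trans hDG) hCeven
      have hmin := hF.2 _ hjoin
      have hCW : (C ∩ F).ncard ≤ (C \ F).ncard := by
        have h1 : ((F \ C) ∪ (C \ F)).ncard = (F \ C).ncard + (C \ F).ncard := by
          rw [Set.ncard_union_eq _ (Set.toFinite _) (Set.toFinite _)]
          rw [Set.disjoint_left]
          rintro f ⟨-, h2⟩ ⟨h3, -⟩
          exact h2 h3
        have h2 := aux_ncard_split F C
        have h3 : F ∩ C = C ∩ F := Set.inter_comm _ _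
        rw [h3] at h2
        omega
      -- induction on D \ C
      have hlt : (D \ C).ncard ≤ n := by
        have : (D \ C).ncard < D.ncard := by
          apply Set.ncard_lt_ncard _ (Set.toFinite D)
          refine ⟨Set.diff_subset, fun hsub => ?_⟩
          have := hsub he
          exact this.2 (Or.inr rfl)
        omega
      have hsplit : ∀ v, (dS D v).ncard = (dS (D \ C) v).ncard + (dS C v).ncard := by
        intro v
        have h1 : dS D v = dS (D \ C) v ∪ dS C v := by
          rw [← dS_union, Set.diff_union_of_subset hCD]
        rw [h1, Set.ncard_union_eq _ (Set.toFinite _) (Set.toFinite _)]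
        rw [dS_diff, Set.disjoint_left]
        rintro f ⟨-, hff⟩ hf
        exact hff hf
      have hodd'' : ∀ v, Odd (dS (D \ C) v).ncard → v ∈ X := by
        intro v hv
        exfalso
        apply hS v
        have h1 := hsplit v
        have h2 := hCeven v
        rw [Nat.odd_iff] at hv ⊢
        rw [Nat.even_iff] at h2
        omega
      have hIH := ih (D \ C) hlt (Set.diff_subset.trans hDG) hodd''
      have hs1 : (D ∩ F).ncard = ((D \ C) ∩ F).ncard + (C ∩ F).ncard := by
        rw [← Set.ncard_union_eq _ (Set.toFinite _) (Set.toFinite _)]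
        · congr 1
          ext f
          constructor
          · rintro ⟨hf, hff⟩
            by_cases hfc : f ∈ C
            · exact Or.inr ⟨hfc, hff⟩
            · exact Or.inl ⟨⟨hf, hfc⟩, hff⟩
          · rintro (⟨⟨hf, -⟩, hff⟩ | ⟨hf, hff⟩)
            exacts [⟨hf, hff⟩, ⟨hCD hf, hff⟩]
        · rw [Set.disjoint_left]
          rintro f ⟨⟨-, hff⟩, -⟩ ⟨hf, -⟩
          exact hff hf
      have hs2 : (D \ F).ncard = ((D \ C) \ F).ncard + (C \ F).ncard := by
        rw [← Set.ncard_union_eq _ (Set.toFinite _) (Set.toFinite _)]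
        · congr 1
          ext f
          constructor
          · rintro ⟨hf, hff⟩
            by_cases hfc : f ∈ C
            · exact Or.inr ⟨hfc, hff⟩
            · exact Or.inl ⟨⟨hf, hfc⟩, hff⟩
          · rintro (⟨⟨hf, -⟩, hff⟩ | ⟨hf, hff⟩)
            exacts [⟨hf, hff⟩, ⟨hCD hf, hff⟩]
        · rw [Set.disjoint_left]
          rintro f ⟨⟨-, hff⟩, -⟩ ⟨hf, -⟩
          exact hff hf
      omega

end Stmt9Aux4


/-- if `(Ĝ, T̂)` is obtained from `(G, T)` by adding new vertices and
edges joining new vertices to `X` (with `T̂ = T`), then a set of edges is a minimum join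
of `(Ĝ, T̂)` iff it is a minimum join of `(G, T)`. -/
theorem stmt_9 [Fintype V] (G Ghat : SimpleGraph V) (Vg T A B X : Set V)
    (F : Set (Sym2 V))
    (hGV : ∀ v w : V, G.Adj v w → v ∈ Vg ∧ w ∈ Vg)
    (hT : T ⊆ Vg) (hGT : IsGraft G T)
    (hbip : IsBipartitionOn G Vg A B)
    (hF : IsMinJoin G T F) (hXA : X ⊆ A) (hX : MaxBipExtreme G F A B X)
    (hsub : G ≤ Ghat)
    (hnew : ∀ v w : V, Ghat.Adj v w → ¬ G.Adj v w →
      (v ∈ X ∧ w ∉ Vg) ∨ (w ∈ X ∧ v ∉ Vg))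
    (hGhat : IsGraft Ghat T) :
    ∀ F' : Set (Sym2 V), IsMinJoin Ghat T F' ↔ IsMinJoin G T F' := by
  classical
  have hXVg : X ⊆ Vg := fun x hx => by
    rw [← hbip.1]; exact Or.inl (hXA hx)
  have hGsub : G.edgeSet ⊆ Ghat.edgeSet := SimpleGraph.edgeSet_mono hsub
  have hjoinGGhat : ∀ F₀ : Set (Sym2 V), IsJoin G T F₀ → IsJoin Ghat T F₀ :=
    fun F₀ h => ⟨h.1.trans hGsub, h.2⟩
  -- the key bound: every join of Ghat has size at least |F| + (number of new edges)
  have key : ∀ F₀ : Set (Sym2 V), IsJoin Ghat T F₀ →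
      F.ncard + (F₀ \ G.edgeSet).ncard ≤ F₀.ncard := by
    intro F₀ h₀
    set J : Set (Sym2 V) := F₀ ∩ G.edgeSet with hJ
    set N : Set (Sym2 V) := F₀ \ G.edgeSet with hN
    set D : Set (Sym2 V) := (F \ J) ∪ (J \ F) with hD
    have hDG : D ⊆ G.edgeSet := by
      rintro e (⟨h1, -⟩ | ⟨h1, -⟩)
      · exact hF.1.1 h1
      · exact h1.2
    have hodd : ∀ v, Odd (dS D v).ncard → v ∈ X := by
      intro v hv
      by_contra hvX
      by_cases hvVg : v ∈ Vg
      · -- no new edges are incident to v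
        have hNv : dS N v = ∅ := by
          ext f
          simp only [dS, Set.mem_setOf_eq, Set.mem_empty_iff_false, iff_false, not_and]
          intro hfN hvf
          induction f using Sym2.ind with
          | _ c d =>
          have hcd : Ghat.Adj c d := h₀.1 hfN.1
          have hncd : ¬ G.Adj c d := fun h => hfN.2 (G.mem_edgeSet.mpr h)
          rw [Sym2.mem_iff] at hvf
          rcases hnew c d hcd hncd with ⟨hcX, hdV⟩ | ⟨hdX, hcV⟩ <;>
            rcases hvf with rfl | rfl
          · exact hvX hcX
          · exact hdV hvVg
          · exact hcV hvVg
          · exact hvX hdX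
        have hsplitF₀ : (dS F₀ v).ncard = (dS J v).ncard + (dS N v).ncard := by
          have h1 : dS F₀ v = dS J v ∪ dS N v := by
            rw [← dS_union]
            congr 1
            rw [hJ, hN, Set.inter_union_diff]
          rw [h1, Set.ncard_union_eq _ (Set.toFinite _) (Set.toFinite _)]
          rw [Set.disjoint_left]
          rintro f ⟨⟨-, h2⟩, -⟩ ⟨⟨-, h3⟩, -⟩
          exact h3 h2
        have hparity := dS_sd_parity F J v
        rw [← hD] at hparity
        have hFv := hF.1.2 v
        have hF₀v := h₀.2 v
        have hFv' : v ∈ T ↔ Odd (dS F v).ncard := hFv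
        have hF₀v' : v ∈ T ↔ Odd (dS F₀ v).ncard := hF₀v
        rw [hNv, Set.ncard_empty] at hsplitF₀
        rw [Nat.odd_iff] at hv hFv' hF₀v'
        by_cases hvT : v ∈ T
        · have h1 := hFv'.mp hvT
          have h2 := hF₀v'.mp hvT
          omega
        · have h1 : ¬ _ := fun h => hvT (hFv'.mpr h)
          have h2 : ¬ _ := fun h => hvT (hF₀v'.mpr h)
          omega
      · -- v is not in Vg at all, so no edge of D is incident to v
        have hDv : dS D v = ∅ := by
          ext f
          simp only [dS, Set.mem_setOf_eq, Set.mem_empty_iff_false, iff_false, not_and]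
          intro hfD hvf
          have hfG := hDG hfD
          induction f using Sym2.ind with
          | _ c d =>
          have hcd : G.Adj c d := hfG
          rw [Sym2.mem_iff] at hvf
          rcases hvf with rfl | rfl
          · exact hvVg (hGV _ _ hcd).1
          · exact hvVg (hGV _ _ hcd).2
        rw [hDv, Set.ncard_empty] at hv
        simp at hv
    have hcore := core_ineq hF hX.1 D.ncard D le_rfl hDG hodd
    have h1 : D ∩ F = F \ J := by
      ext f
      constructor
      · rintro ⟨hf1 | hf1, hf2⟩
        · exact hf1
        · exact absurd hf2 hf1.2
      · intro hf
        exact ⟨Or.inl hf, hf.1⟩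
    have h2 : D \ F = J \ F := by
      ext f
      constructor
      · rintro ⟨hf1 | hf1, hf2⟩
        · exact absurd hf1.1 hf2
        · exact hf1
      · intro hf
        exact ⟨Or.inr hf, hf.2⟩
    rw [h1, h2] at hcore
    have h3 := aux_ncard_split F J
    have h4 := aux_ncard_split J F
    rw [Set.inter_comm J F] at h4
    have h5 : F₀.ncard = J.ncard + N.ncard := by
      have h6 : F₀ = J ∪ N := by rw [hJ, hN, Set.inter_union_diff]
      rw [h6, Set.ncard_union_eq _ (Set.toFinite _) (Set.toFinite _)]
      rw [Set.disjoint_left]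
      rintro f ⟨-, hf2⟩ ⟨-, hf3⟩
      exact hf3 hf2
    omega
  intro F'
  constructor
  · intro hmin'
    have h1 := key F' hmin'.1
    have h2 : F'.ncard ≤ F.ncard := hmin'.2 F (hjoinGGhat F hF.1)
    have hN0 : (F' \ G.edgeSet).ncard = 0 := by omega
    have hNempty : F' \ G.edgeSet = ∅ := (Set.ncard_eq_zero (Set.toFinite _)).mp hN0
    have hsubG : F' ⊆ G.edgeSet := Set.diff_eq_empty.mp hNempty
    refine ⟨⟨hsubG, hmin'.1.2⟩, ?_⟩
    intro F₃ h₃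
    exact le_trans h2 (hF.2 F₃ h₃)
  · intro hmin₃
    refine ⟨hjoinGGhat F' hmin₃.1, ?_⟩
    intro F₀ h₀
    have h1 := key F₀ h₀
    have h2 : F'.ncard ≤ F.ncard := hmin₃.2 F hF.1
    omega
end

section
/- Let (G,T) be a graft, let X ⊆ V(G) be an extreme set, and let (Ĝ, T̂) be the rootlization of (G,T) by the mount X, the root r, and the attachment s. Then a set F̂ ⊆ E(Ĝ) is a minimum join of (Ĝ, T̂) if and only if F̂ = F ∪ {rs} for some minimum join F of (G,T). -/
open scoped Classical

variable {V : Type*}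

section Helpers

/-- weight of a set of edges -/
noncomputable def setW (F D : Set (Sym2 V)) : ℤ :=
  ((D \ F).ncard : ℤ) - ((D ∩ F).ncard : ℤ)

/-- incidence set -/
def incS (F : Set (Sym2 V)) (v : V) : Set (Sym2 V) := {e ∈ F | v ∈ e}


lemma setW_union {F A B : Set (Sym2 V)} (hfin : A.Finite) (hfin' : B.Finite)
    (h : Disjoint A B) : setW F (A ∪ B) = setW F A + setW F B := by
  unfold setW
  rw [Set.union_diff_distrib, Set.union_inter_distrib_right,
    Set.ncard_union_eq (h.mono Set.diff_subset Set.diff_subset) hfin.diff hfin'.diff,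
    Set.ncard_union_eq (h.mono Set.inter_subset_left Set.inter_subset_left)
      (hfin.inter_of_left _) (hfin'.inter_of_left _)]
  push_cast; ring

lemma parity_symmDiff {A B : Set (Sym2 V)} (hA : A.Finite) (hB : B.Finite) :
    Odd (symmDiff A B).ncard ↔ ((Odd A.ncard) ↔ ¬ Odd B.ncard) := by
  have key : (symmDiff A B).ncard + (A ∩ B).ncard + (A ∩ B).ncard = A.ncard + B.ncard := by
    have h1 : A ∪ B = (symmDiff A B) ∪ (A ∩ B) := by
      rw [Set.symmDiff_def]; ext x; simp [Set.mem_union, Set.mem_inter_iff, Set.mem_diff]; tauto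
    have h2 : (A ∪ B).ncard = (symmDiff A B).ncard + (A ∩ B).ncard := by
      have hsd : (symmDiff A B).Finite := (hA.union hB).subset (by
        intro e he; rw [Set.mem_symmDiff] at he; simp only [Set.mem_union]; tauto)
      rw [h1, Set.ncard_union_eq ?_ hsd (hA.inter_of_left _)]
      rw [Set.disjoint_left]; intro e he; rw [Set.mem_symmDiff] at he
      simp only [Set.mem_inter_iff]; tauto
    have h3 := Set.ncard_union_add_ncard_inter A B hA hB
    omega
  rcases Nat.even_or_odd (A ∩ B).ncard with h | h <;>
  · rcases Nat.even_or_odd A.ncard with h1 | h1 <;> rcases Nat.even_or_odd B.ncard with h2 | h2 <;>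
    · constructor
      · intro hh; simp_all [Nat.even_iff, Nat.odd_iff] <;> omega
      · intro hh; simp_all [Nat.even_iff, Nat.odd_iff] <;> omega


lemma incS_subset (F : Set (Sym2 V)) (v : V) : incS F v ⊆ F := fun e he => he.1

lemma incS_empty_of_not_support {G : SimpleGraph V} {a b v : V} (q : G.Walk a b)
    (hv : v ∉ q.support) : incS {e | e ∈ q.edges} v = ∅ := by
  ext e
  simp only [incS, Set.mem_setOf_eq, Set.mem_empty_iff_false, iff_false, not_and]
  intro he hve
  induction e with
  | h x y =>
    rcases Sym2.mem_iff.mp hve with rfl | rfl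
    · exact hv (q.fst_mem_support_of_mem_edges he)
    · exact hv (q.snd_mem_support_of_mem_edges he)

lemma edges_finite {G : SimpleGraph V} {a b : V} (q : G.Walk a b) :
    {e : Sym2 V | e ∈ q.edges}.Finite := q.edges.finite_toSet

lemma walk_parity {G : SimpleGraph V} {a b : V} (p : G.Walk a b) (hp : p.IsPath) (v : V) :
    Odd (incS {e | e ∈ p.edges} v).ncard ↔ ((v = a ∧ v ≠ b) ∨ (v = b ∧ v ≠ a)) := by
  induction p with
  | nil =>
    simp only [SimpleGraph.Walk.edges_nil, List.not_mem_nil]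
    have : incS (∅ : Set (Sym2 V)) v = ∅ := by ext e; simp [incS]
    simp only [Set.setOf_false, this, Set.ncard_empty]
    simp [Nat.odd_iff]
  | @cons a c b h q ih =>
    have hq : q.IsPath := hp.of_cons
    have ha : a ∉ q.support := (SimpleGraph.Walk.cons_isPath_iff h q).mp hp |>.2
    have hb : b ∈ q.support := q.end_mem_support
    have hab : a ≠ b := fun hh => ha (hh ▸ hb)
    have hac : a ≠ c := h.ne
    have henq : s(a, c) ∉ q.edges := fun hh => ha (q.fst_mem_support_of_mem_edges hh)
    have hset : {e : Sym2 V | e ∈ (SimpleGraph.Walk.cons h q).edges} =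
        insert s(a, c) {e | e ∈ q.edges} := by
      ext e; simp [SimpleGraph.Walk.edges_cons]
    rw [hset]
    have hsplit : incS (insert s(a, c) {e | e ∈ q.edges}) v =
        if v ∈ s(a, c) then insert s(a, c) (incS {e | e ∈ q.edges} v)
        else incS {e | e ∈ q.edges} v := by
      split_ifs with hv
      · ext e; simp only [incS, Set.mem_setOf_eq, Set.mem_insert_iff]
        constructor
        · rintro ⟨rfl | he, hve⟩
          · exact Or.inl rfl
          · exact Or.inr ⟨he, hve⟩
        · rintro (rfl | ⟨he, hve⟩)
          · exact ⟨Or.inl rfl, hv⟩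
          · exact ⟨Or.inr he, hve⟩
      · ext e; simp only [incS, Set.mem_setOf_eq, Set.mem_insert_iff]
        constructor
        · rintro ⟨rfl | he, hve⟩
          · exact absurd hve hv
          · exact ⟨he, hve⟩
        · rintro ⟨he, hve⟩; exact ⟨Or.inr he, hve⟩
    rw [hsplit]
    by_cases hv : v ∈ s(a, c)
    · rw [if_pos hv]
      have hne : s(a, c) ∉ incS {e | e ∈ q.edges} v := fun hh => henq (incS_subset _ _ hh)
      rw [Set.ncard_insert_of_notMem hne (((edges_finite q).subset (incS_subset _ _)))]
      rw [Nat.odd_add_one, Nat.not_odd_iff_even, ← Nat.not_odd_iff_even, ih hq]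
      rcases Sym2.mem_iff.mp hv with rfl | rfl
      · simp [hab, hac]
      · have hva : v ≠ a := fun hh => hac hh.symm
        by_cases hvb : v = b
        · subst hvb; simp [hva]
        · simp [hva, hvb]
    · rw [if_neg hv]
      rw [ih hq]
      have hva : v ≠ a := fun hh => hv (hh ▸ Sym2.mem_mk_left a c)
      have hvc : v ≠ c := fun hh => hv (hh ▸ Sym2.mem_mk_right a c)
      tauto
lemma ncard_filter_list {l : List (Sym2 V)} (hl : l.Nodup) (P : Sym2 V → Prop) :
    {e | e ∈ l ∧ P e}.ncard = (l.filter fun e => P e).length := by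
  classical
  have h1 : {e | e ∈ l ∧ P e} = ↑(l.filter fun e => P e).toFinset := by
    ext e
    simp only [Set.mem_setOf_eq, Finset.coe_sort_coe, List.coe_toFinset, Set.mem_setOf_eq,
      List.mem_filter, decide_eq_true_eq]
  rw [h1, Set.ncard_coe_finset, List.toFinset_card_of_nodup (hl.filter _)]

lemma walkWeight_eq_setW {G : SimpleGraph V} (F : Set (Sym2 V)) {x y : V}
    {p : G.Walk x y} (hp : p.IsPath) :
    walkWeight F p = setW F {e | e ∈ p.edges} := by
  unfold walkWeight setW
  have h1 : {e | e ∈ p.edges} \ F = {e | e ∈ p.edges ∧ e ∉ F} := rfl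
  have h2 : {e | e ∈ p.edges} ∩ F = {e | e ∈ p.edges ∧ e ∈ F} := rfl
  rw [h1, h2, ncard_filter_list hp.edges_nodup, ncard_filter_list hp.edges_nodup]
  congr 1 <;> · congr 2; apply List.filter_congr; intro e _; exact decide_eq_decide.mpr Iff.rfl

lemma walkWeight_lb [Fintype V] {G : SimpleGraph V} (F : Set (Sym2 V)) {x y : V}
    {p : G.Walk x y} (hp : p.IsPath) : -(Fintype.card V : ℤ) ≤ walkWeight F p := by
  unfold walkWeight
  have h1 : (p.edges.filter fun e => e ∈ F).length ≤ p.edges.length :=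
    List.length_filter_le _ _
  have h2 : p.edges.length < Fintype.card V := by
    rw [SimpleGraph.Walk.length_edges]; exact hp.length_lt
  omega

lemma distF_le [Fintype V] {G : SimpleGraph V} (F : Set (Sym2 V)) {x y : V}
    (p : G.Walk x y) (hp : p.IsPath) : distF G F x y ≤ walkWeight F p := by
  apply csInf_le
  · refine ⟨-(Fintype.card V : ℤ), ?_⟩
    rintro w ⟨q, hq, rfl⟩
    exact walkWeight_lb F hq
  · exact ⟨p, hp, rfl⟩



lemma incS_ncard_eq_degree [Fintype V] (H : SimpleGraph V) (v : V) :
    (incS H.edgeSet v).ncard = H.degree v := by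
  have h1 : incS H.edgeSet v = H.incidenceSet v := rfl
  rw [h1, ← Nat.card_coe_set_eq, Nat.card_eq_fintype_card,
    SimpleGraph.card_incidenceSet_eq_degree]

lemma exists_odd_path [Fintype V] {G : SimpleGraph V} {D : Set (Sym2 V)} (hD : D ⊆ G.edgeSet)
    {u : V} (hu : Odd (incS D u).ncard) :
    ∃ v, v ≠ u ∧ Odd (incS D v).ncard ∧
      ∃ p : G.Walk u v, p.IsPath ∧ {e | e ∈ p.edges} ⊆ D := by
  set H := SimpleGraph.fromEdgeSet D with hH
  have hHG : H ≤ G := by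
    intro v w h
    rw [hH, SimpleGraph.fromEdgeSet_adj] at h
    exact (SimpleGraph.mem_edgeSet G).mp (hD h.1)
  have hHE : H.edgeSet = D := by
    rw [hH, SimpleGraph.edgeSet_fromEdgeSet]
    ext e
    simp only [Set.mem_diff, Set.mem_setOf_eq, and_iff_left_iff_imp]
    intro he
    exact SimpleGraph.not_isDiag_of_mem_edgeSet G (hD he)
  have hdegD : ∀ v, (incS D v).ncard = H.degree v := by
    intro v; have := incS_ncard_eq_degree H v; rw [hHE] at this; convert this
  set K := {w | H.Reachable u w} with hK
  set H' := gRestrict H K with hH'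
  have hnbr : ∀ w ∈ K, H'.neighborSet w = H.neighborSet w := by
    intro w hw
    ext n
    simp only [SimpleGraph.mem_neighborSet, hH', gRestrict]
    exact ⟨fun h => h.1, fun h => ⟨h, hw, hw.trans h.reachable⟩⟩
  have hdeg' : ∀ w ∈ K, H'.degree w = H.degree w := by
    intro w hw
    rw [← SimpleGraph.card_neighborSet_eq_degree, ← SimpleGraph.card_neighborSet_eq_degree]
    exact Fintype.card_congr (Equiv.setCongr (hnbr w hw))
  have hdeg0 : ∀ w, w ∉ K → H'.degree w = 0 := by
    intro w hw
    rw [← SimpleGraph.card_neighborSet_eq_degree]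
    have : H'.neighborSet w = ∅ := by
      ext n; simp only [SimpleGraph.mem_neighborSet, hH', gRestrict, Set.mem_empty_iff_false,
        iff_false]
      rintro ⟨-, hwK, -⟩; exact hw hwK
    rw [Fintype.card_eq_zero_iff]
    exact Set.isEmpty_coe_sort.mpr this
  have huK : u ∈ K := SimpleGraph.Reachable.refl u
  have hu' : u ∈ Finset.univ.filter fun v => Odd (H'.degree v) := by
    simp only [Finset.mem_filter, Finset.mem_univ, true_and]
    rw [hdeg' u huK, ← hdegD]; exact hu
  have heven := SimpleGraph.even_card_odd_degree_vertices H'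
  have hcard : 1 < (Finset.univ.filter fun v => Odd (H'.degree v)).card := by
    rcases heven with ⟨k, hk⟩
    have h1 : 0 < (Finset.univ.filter fun v => Odd (H'.degree v)).card :=
      Finset.card_pos.mpr ⟨u, hu'⟩
    omega
  obtain ⟨y, hy, hyu⟩ := Finset.exists_mem_ne hcard u
  simp only [Finset.mem_filter, Finset.mem_univ, true_and] at hy
  have hyK : y ∈ K := by
    by_contra hyK
    rw [hdeg0 y hyK] at hy
    simp [Nat.odd_iff] at hy
  refine ⟨y, hyu, ?_, ?_⟩
  · rw [hdegD, ← hdeg' y hyK]; exact hy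
  · obtain ⟨w⟩ := (hyK : H.Reachable u y)
    set p' : H.Walk u y := (w.toPath : H.Path u y).1 with hp'
    have hp'path : p'.IsPath := (w.toPath).2
    refine ⟨p'.mapLe hHG, ?_, ?_⟩
    · apply SimpleGraph.Walk.map_isPath_of_injective _ hp'path
      intro a b h; exact h
    · intro e he
      simp only [Set.mem_setOf_eq, SimpleGraph.Walk.mapLe, SimpleGraph.Walk.edges_map] at he
      have : e ∈ p'.edges := by
        simpa [Sym2.map_id] using he
      have h2 : e ∈ w.edges := SimpleGraph.Walk.edges_toPath_subset w this
      rw [← hHE]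
      exact SimpleGraph.Walk.edges_subset_edgeSet w h2

end Helpers


section Helpers2
variable {V : Type*}

lemma incS_insert (e : Sym2 V) (S : Set (Sym2 V)) (v : V) :
    incS (insert e S) v = if v ∈ e then insert e (incS S v) else incS S v := by
  split_ifs with hv
  · ext f; simp only [incS, Set.mem_setOf_eq, Set.mem_insert_iff]
    constructor
    · rintro ⟨rfl | hf, hvf⟩
      · exact Or.inl rfl
      · exact Or.inr ⟨hf, hvf⟩
    · rintro (rfl | ⟨hf, hvf⟩)
      · exact ⟨Or.inl rfl, hv⟩
      · exact ⟨Or.inr hf, hvf⟩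
  · ext f; simp only [incS, Set.mem_setOf_eq, Set.mem_insert_iff]
    constructor
    · rintro ⟨rfl | hf, hvf⟩
      · exact absurd hvf hv
      · exact ⟨hf, hvf⟩
    · rintro ⟨hf, hvf⟩; exact ⟨Or.inr hf, hvf⟩

lemma incS_diff (A B : Set (Sym2 V)) (v : V) :
    incS (A \ B) v = incS A v \ incS B v := by
  ext e; simp only [incS, Set.mem_setOf_eq, Set.mem_diff]; tauto

lemma incS_mono {A B : Set (Sym2 V)} (h : B ⊆ A) (v : V) : incS B v ⊆ incS A v :=
  fun e he => ⟨h he.1, he.2⟩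

lemma incS_symmDiff (A B : Set (Sym2 V)) (v : V) :
    incS (symmDiff A B) v = symmDiff (incS A v) (incS B v) := by
  ext e
  rw [Set.mem_symmDiff]
  simp only [incS, Set.mem_setOf_eq, Set.mem_symmDiff]
  tauto

lemma parity_diff {A B : Set (Sym2 V)} (hA : A.Finite) (h : B ⊆ A) {v : V} :
    Odd ((incS A v \ incS B v).ncard) ↔
      ((Odd (incS A v).ncard) ↔ ¬ Odd (incS B v).ncard) := by
  have hsub : incS B v ⊆ incS A v := incS_mono h v
  have hfa : (incS A v).Finite := hA.subset (incS_subset A v)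
  have hle : (incS B v).ncard ≤ (incS A v).ncard := Set.ncard_le_ncard hsub hfa
  rw [Set.ncard_diff hsub (hfa.subset hsub), Nat.odd_sub hle, Nat.not_odd_iff_even]

/-- join cardinality comparison formula -/
lemma card_eq_add_setW {F₀ F' : Set (Sym2 V)} (h₀ : F₀.Finite) (h' : F'.Finite) :
    (F'.ncard : ℤ) = (F₀.ncard : ℤ) + setW F₀ (symmDiff F' F₀) := by
  have e1 : symmDiff F' F₀ \ F₀ = F' \ F₀ := by
    ext e; rw [Set.mem_diff, Set.mem_symmDiff]; simp only [Set.mem_diff]; tauto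
  have e2 : symmDiff F' F₀ ∩ F₀ = F₀ \ F' := by
    ext e; rw [Set.mem_inter_iff, Set.mem_symmDiff]; simp only [Set.mem_diff]; tauto
  unfold setW
  rw [e1, e2]
  have h3 : (F' ∩ F₀).ncard + (F' \ F₀).ncard = F'.ncard :=
    Set.ncard_inter_add_ncard_diff_eq_ncard F' F₀ h'
  have h4 : (F₀ ∩ F').ncard + (F₀ \ F').ncard = F₀.ncard :=
    Set.ncard_inter_add_ncard_diff_eq_ncard F₀ F' h₀
  have h5 : F' ∩ F₀ = F₀ ∩ F' := Set.inter_comm _ _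
  rw [h5] at h3
  omega

lemma isJoin_symmDiff {G : SimpleGraph V} {T₁ T₂ : Set V} {F₁ F₂ : Set (Sym2 V)}
    (hfin : G.edgeSet.Finite)
    (h₁ : IsJoin G T₁ F₁) (h₂ : IsJoin G T₂ F₂) :
    IsJoin G (symmDiff T₁ T₂) (symmDiff F₁ F₂) := by
  obtain ⟨hs₁, hp₁⟩ := h₁
  obtain ⟨hs₂, hp₂⟩ := h₂
  constructor
  · intro e he; rw [Set.mem_symmDiff] at he; rcases he with ⟨he, -⟩ | ⟨he, -⟩
    exacts [hs₁ he, hs₂ he]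
  · intro v
    have e1 : {e ∈ symmDiff F₁ F₂ | v ∈ e} = incS (symmDiff F₁ F₂) v := rfl
    rw [e1, incS_symmDiff, parity_symmDiff ((hfin.subset hs₁).subset (incS_subset _ v))
      ((hfin.subset hs₂).subset (incS_subset _ v))]
    have q1 := hp₁ v
    have q2 := hp₂ v
    rw [Set.mem_symmDiff]
    change v ∈ T₁ ↔ Odd (incS F₁ v).ncard at q1
    change v ∈ T₂ ↔ Odd (incS F₂ v).ncard at q2
    tauto

end Helpers2

section MainIneq
variable {V : Type*}

/-- the key inequality: an edge set whose odd vertices lie in an extreme set has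
nonnegative weight w.r.t. a minimum join. -/
lemma main_nonneg [Fintype V] {G : SimpleGraph V} {T X : Set V} {F₀ : Set (Sym2 V)}
    (hF₀ : IsMinJoin G T F₀) (hext : IsExtremeSet G F₀ X) :
    ∀ n : ℕ, ∀ D : Set (Sym2 V), D.ncard ≤ n → D ⊆ G.edgeSet →
      (∀ v : V, Odd (incS D v).ncard → v ∈ X) → 0 ≤ setW F₀ D := by
  intro n
  induction n with
  | zero =>
    intro D hcard _ _
    have : D = ∅ := by
      have := Set.toFinite D
      rw [← Set.ncard_eq_zero this]; omega
    simp [this, setW]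
  | succ n ih =>
    intro D hcard hDsub hDX
    by_cases hD0 : D = ∅
    · simp [hD0, setW]
    by_cases hOdd : ∃ u, Odd (incS D u).ncard
    · obtain ⟨u, hu⟩ := hOdd
      have hux : u ∈ X := hDX u hu
      obtain ⟨y, hyu, hyOdd, p, hp, hpD⟩ := exists_odd_path hDsub hu
      have hyX : y ∈ X := hDX y hyOdd
      set S : Set (Sym2 V) := {e | e ∈ p.edges} with hS
      have hSD : S ⊆ D := hpD
      have hfinD : D.Finite := Set.toFinite D
      have hfinS : S.Finite := edges_finite p
      have hsplit : D = S ∪ (D \ S) := by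
        rw [Set.union_diff_cancel hSD]
      have hdisj : Disjoint S (D \ S) := Set.disjoint_sdiff_right
      have hW : setW F₀ D = setW F₀ S + setW F₀ (D \ S) := by
        conv_lhs => rw [hsplit]
        exact setW_union hfinS hfinD.diff hdisj
      have hwS : 0 ≤ setW F₀ S := by
        have h1 : distF G F₀ u y ≤ walkWeight F₀ p := distF_le F₀ p hp
        rw [walkWeight_eq_setW F₀ hp] at h1
        exact le_trans (hext u hux y hyX) h1
      have hSne : S.Nonempty := by
        rw [hS]
        by_contra hS0
        rw [Set.not_nonempty_iff_eq_empty] at hS0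
        have hnil : p.edges = [] := by
          rcases hedges : p.edges with _ | ⟨f, l⟩
          · rfl
          · exact absurd (Set.eq_empty_iff_forall_notMem.mp hS0 f (by rw [hedges]; simp)) not_false
        have : u = y := by
          have hlen : p.length = 0 := by
            rw [← SimpleGraph.Walk.length_edges, hnil]; rfl
          exact p.eq_of_length_eq_zero hlen
        exact hyu this.symm
      have hcard' : (D \ S).ncard ≤ n := by
        obtain ⟨e₀, he₀⟩ := hSne
        have h1 : (D \ S).ncard < D.ncard := by
          apply Set.ncard_lt_ncard _ hfinD
          constructor
          · exact Set.diff_subset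
          · intro hsub
            exact (hsub (hSD he₀)).2 he₀
        omega
      have hDX' : ∀ v, Odd (incS (D \ S) v).ncard → v ∈ X := by
        intro v hv
        by_cases hvu : v = u
        · exact hvu ▸ hux
        by_cases hvy : v = y
        · exact hvy ▸ hyX
        apply hDX v
        rw [incS_diff, parity_diff hfinD hSD] at hv
        have hevS : ¬ Odd (incS S v).ncard := by
          rw [hS, walk_parity p hp v]
          push_neg
          exact ⟨fun hh => absurd hh hvu, fun hh => absurd hh hvy⟩
        tauto
      rw [hW]
      have := ih (D \ S) hcard' (fun e he => hDsub he.1) hDX'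
      omega
    · -- all vertices even: extract a "cycle" through an arbitrary edge
      push_neg at hOdd
      simp only [Nat.not_odd_iff_even] at hOdd
      obtain ⟨e, he⟩ := Set.nonempty_iff_ne_empty.mpr hD0
      obtain ⟨a, b, rfl⟩ : ∃ a b, e = s(a, b) := by
        induction e with
        | h a b => exact ⟨a, b, rfl⟩
      have hab : a ≠ b := (G.ne_of_adj ((SimpleGraph.mem_edgeSet G).mp (hDsub he)))
      set D' : Set (Sym2 V) := D \ {s(a, b)} with hD'
      have hD'sub : D' ⊆ G.edgeSet := fun f hf => hDsub hf.1
      have hfinD : D.Finite := Set.toFinite D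
      have hsingle : ({s(a, b)} : Set (Sym2 V)) ⊆ D := by
        intro f hf; rw [Set.mem_singleton_iff] at hf; exact hf ▸ he
      have hincSingle : ∀ v : V, incS {s(a, b)} v = if v ∈ s(a, b) then {s(a, b)} else ∅ := by
        intro v; split_ifs with hv
        · ext f; simp only [incS, Set.mem_setOf_eq, Set.mem_singleton_iff]
          constructor
          · rintro ⟨rfl, -⟩; rfl
          · rintro rfl; exact ⟨rfl, hv⟩
        · ext f; simp only [incS, Set.mem_setOf_eq, Set.mem_singleton_iff,
            Set.mem_empty_iff_false, iff_false, not_and]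
          rintro rfl; exact hv
      have hparD' : ∀ v : V, Odd (incS D' v).ncard ↔ v ∈ s(a, b) := by
        intro v
        rw [hD', incS_diff, parity_diff hfinD hsingle, hincSingle v]
        have hDv : ¬ Odd (incS D v).ncard := Nat.not_odd_iff_even.mpr (hOdd v)
        split_ifs with hv <;> simp [hv, hDv, Nat.odd_iff]
      have hua : Odd (incS D' a).ncard := (hparD' a).mpr (by simp)
      obtain ⟨y, hya, hyOdd, p, hp, hpD'⟩ := exists_odd_path hD'sub hua
      have hyb : y = b := by
        have := (hparD' y).mp hyOdd
        rcases Sym2.mem_iff.mp this with h1 | h1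
        · exact absurd h1 hya
        · exact h1
      subst hyb
      set S : Set (Sym2 V) := {f | f ∈ p.edges} with hS
      have hSD' : S ⊆ D' := hpD'
      have heS : s(a, y) ∉ S := fun hh => (hSD' hh).2 rfl
      set C : Set (Sym2 V) := insert s(a, y) S with hC
      have hCD : C ⊆ D := by
        intro f hf
        rcases hf with rfl | hf
        · exact he
        · exact (hSD' hf).1
      have hfinS : S.Finite := edges_finite p
      have hfinC : C.Finite := hfinS.insert _
      -- C has all-even incidences
      have hCeven : ∀ v : V, Even (incS C v).ncard := by
        intro v
        rw [hC, incS_insert]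
        split_ifs with hv
        · have hne : s(a, y) ∉ incS S v := fun hh => heS (incS_subset _ _ hh)
          rw [Set.ncard_insert_of_notMem hne (hfinS.subset (incS_subset _ _))]
          rw [Nat.even_add_one, Nat.not_even_iff_odd, hS, walk_parity p hp v]
          rcases Sym2.mem_iff.mp hv with rfl | rfl
          · exact Or.inl ⟨rfl, hab⟩
          · exact Or.inr ⟨rfl, fun hh => hab hh.symm⟩
        · rw [← Nat.not_odd_iff_even, hS, walk_parity p hp v]
          push_neg
          constructor
          · intro hh; exact absurd (hh ▸ Sym2.mem_mk_left a y : v ∈ s(a, y)) hv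
          · intro hh; exact absurd (hh ▸ Sym2.mem_mk_right a y : v ∈ s(a, y)) hv
      -- F₀ Δ C is a join of T, so by minimality setW F₀ C ≥ 0
      have hjoinC : IsJoin G (∅ : Set V) C := by
        constructor
        · exact fun f hf => hDsub (hCD hf)
        · intro v
          simp only [Set.mem_empty_iff_false, false_iff, Nat.not_odd_iff_even]
          exact hCeven v
      have hfinE : G.edgeSet.Finite := Set.toFinite _
      have hjoin2 : IsJoin G T (symmDiff F₀ C) := by
        have := isJoin_symmDiff hfinE hF₀.1 hjoinC
        rwa [show symmDiff T (∅ : Set V) = T from by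
          simp [Set.symmDiff_def]] at this
      have hmin := hF₀.2 _ hjoin2
      have hsd : symmDiff (symmDiff F₀ C) F₀ = C := by
        rw [symmDiff_comm F₀ C, symmDiff_symmDiff_cancel_right]
      have hfinF2 : (symmDiff F₀ C).Finite := hfinE.subset hjoin2.1
      have hcardeq := card_eq_add_setW (F₀ := F₀) (F' := symmDiff F₀ C)
        (hfinE.subset hF₀.1.1) hfinF2
      rw [hsd] at hcardeq
      have hcast : (F₀.ncard : ℤ) ≤ ((symmDiff F₀ C).ncard : ℤ) := Nat.cast_le.mpr hmin
      have hwC : 0 ≤ setW F₀ C := by linarith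
      -- split D into C and the rest
      have hsplit : D = C ∪ (D \ C) := by rw [Set.union_diff_cancel hCD]
      have hdisj : Disjoint C (D \ C) := Set.disjoint_sdiff_right
      have hW : setW F₀ D = setW F₀ C + setW F₀ (D \ C) := by
        conv_lhs => rw [hsplit]
        exact setW_union hfinC hfinD.diff hdisj
      have hcard' : (D \ C).ncard ≤ n := by
        have h1 : (D \ C).ncard < D.ncard := by
          apply Set.ncard_lt_ncard _ hfinD
          constructor
          · exact Set.diff_subset
          · intro hsub
            exact (hsub he).2 (Or.inl rfl)
        omega
      have hDX' : ∀ v, Odd (incS (D \ C) v).ncard → v ∈ X := by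
        intro v hv
        exfalso
        rw [incS_diff, parity_diff hfinD hCD] at hv
        have h1 : ¬ Odd (incS D v).ncard := Nat.not_odd_iff_even.mpr (hOdd v)
        have h2 : ¬ Odd (incS C v).ncard := Nat.not_odd_iff_even.mpr (hCeven v)
        tauto
      have := ih (D \ C) hcard' (fun f hf => hDsub hf.1) hDX'
      rw [hW]
      omega
end MainIneq

/-- for the rootlization `(Ĝ, T̂)` of `(G, T)` by an extreme mount `X`,
root `r` and attachment `s`, a set `F̂` of edges is a minimum join of `(Ĝ, T̂)` iff
`F̂ = F ∪ {rs}` for some minimum join `F` of `(G, T)`. -/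
theorem stmt_12 [Fintype V] (G : SimpleGraph V) (Vg T X : Set V)
    (F₀ : Set (Sym2 V)) (r s : V)
    (hGV : ∀ v w : V, G.Adj v w → v ∈ Vg ∧ w ∈ Vg)
    (hT : T ⊆ Vg) (hGT : IsGraft G T)
    (hF₀ : IsMinJoin G T F₀) (hXV : X ⊆ Vg) (hext : IsExtremeSet G F₀ X)
    (hr : r ∉ Vg) (hs : s ∉ Vg) (hrs : r ≠ s) :
    ∀ Fhat : Set (Sym2 V),
      IsMinJoin (rootlize G X r s) (T ∪ {r, s}) Fhat ↔
        ∃ F : Set (Sym2 V), IsMinJoin G T F ∧ Fhat = F ∪ {s(r, s)} := by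
  classical
  set Gh := rootlize G X r s with hGh
  set Th : Set V := T ∪ {r, s} with hTh
  -- no G-edge touches r or s
  have hnotrs : ∀ e ∈ G.edgeSet, r ∉ e ∧ s ∉ e := by
    intro e he
    induction e with
    | h v w =>
      have hvw := hGV v w ((SimpleGraph.mem_edgeSet G).mp he)
      constructor
      · intro hmem
        rcases Sym2.mem_iff.mp hmem with rfl | rfl
        · exact hr hvw.1
        · exact hr hvw.2
      · intro hmem
        rcases Sym2.mem_iff.mp hmem with rfl | rfl
        · exact hs hvw.1
        · exact hs hvw.2
  have hrsG : s(r, s) ∉ G.edgeSet := fun hh => (hnotrs _ hh).1 (Sym2.mem_mk_left r s)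
  have hsX : ∀ x ∈ X, x ≠ s ∧ x ≠ r := by
    intro x hx
    exact ⟨fun hh => hs (hh ▸ hXV hx), fun hh => hr (hh ▸ hXV hx)⟩
  have hadj : ∀ v w, Gh.Adj v w ↔
      (G.Adj v w ∨ ((v = r ∧ w = s) ∨ (v = s ∧ w = r)) ∨
        ((v = s ∧ w ∈ X) ∨ (w = s ∧ v ∈ X))) := by
    intro v w
    rw [hGh]
    unfold rootlize
    rw [SimpleGraph.fromRel_adj]
    constructor
    · rintro ⟨hne, h | h⟩
      · rcases h with h | h | h
        · exact Or.inl h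
        · exact Or.inr (Or.inl (Or.inl h))
        · exact Or.inr (Or.inr (Or.inl h))
      · rcases h with h | h | h
        · exact Or.inl h.symm
        · exact Or.inr (Or.inl (Or.inr ⟨h.2, h.1⟩))
        · exact Or.inr (Or.inr (Or.inr ⟨h.1, h.2⟩))
    · rintro (h | (⟨rfl, rfl⟩ | ⟨rfl, rfl⟩) | (⟨rfl, hw⟩ | ⟨rfl, hv⟩))
      · exact ⟨G.ne_of_adj h, Or.inl (Or.inl h)⟩
      · exact ⟨hrs, Or.inl (Or.inr (Or.inl ⟨rfl, rfl⟩))⟩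
      · exact ⟨hrs.symm, Or.inr (Or.inr (Or.inl ⟨rfl, rfl⟩))⟩
      · exact ⟨fun hh => (hsX w hw).1 hh.symm, Or.inl (Or.inr (Or.inr ⟨rfl, hw⟩))⟩
      · exact ⟨(hsX v hv).1, Or.inr (Or.inr (Or.inr ⟨rfl, hv⟩))⟩
  have hedge : ∀ e, e ∈ Gh.edgeSet ↔
      (e ∈ G.edgeSet ∨ e = s(r, s) ∨ ∃ x ∈ X, e = s(s, x)) := by
    intro e
    induction e with
    | h v w =>
      rw [SimpleGraph.mem_edgeSet, hadj v w, SimpleGraph.mem_edgeSet (G := G)]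
      constructor
      · rintro (h | (⟨rfl, rfl⟩ | ⟨rfl, rfl⟩) | (⟨rfl, hw⟩ | ⟨rfl, hv⟩))
        · exact Or.inl h
        · exact Or.inr (Or.inl rfl)
        · exact Or.inr (Or.inl (Sym2.eq_swap))
        · exact Or.inr (Or.inr ⟨w, hw, rfl⟩)
        · exact Or.inr (Or.inr ⟨v, hv, Sym2.eq_swap⟩)
      · rintro (h | h | ⟨x, hx, h⟩)
        · exact Or.inl h
        · rcases Sym2.eq_iff.mp h with ⟨rfl, rfl⟩ | ⟨rfl, rfl⟩
          · exact Or.inr (Or.inl (Or.inl ⟨rfl, rfl⟩))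
          · exact Or.inr (Or.inl (Or.inr ⟨rfl, rfl⟩))
        · rcases Sym2.eq_iff.mp h with ⟨rfl, rfl⟩ | ⟨rfl, rfl⟩
          · exact Or.inr (Or.inr (Or.inl ⟨rfl, hx⟩))
          · exact Or.inr (Or.inr (Or.inr ⟨rfl, hx⟩))
  have hGsub : G.edgeSet ⊆ Gh.edgeSet := fun e he => (hedge e).mpr (Or.inl he)
  have hrsGh : s(r, s) ∈ Gh.edgeSet := (hedge _).mpr (Or.inr (Or.inl rfl))
  have hfinE : G.edgeSet.Finite := Set.toFinite _
  have hfinEh : Gh.edgeSet.Finite := Set.toFinite _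
  -- incidence of singleton {s(r,s)}
  have hincRS : ∀ v : V, incS ({s(r, s)} : Set (Sym2 V)) v =
      if v ∈ s(r, s) then {s(r, s)} else ∅ := by
    intro v; split_ifs with hv
    · ext f; simp only [incS, Set.mem_setOf_eq, Set.mem_singleton_iff]
      constructor
      · rintro ⟨rfl, -⟩; rfl
      · rintro rfl; exact ⟨rfl, hv⟩
    · ext f; simp only [incS, Set.mem_setOf_eq, Set.mem_singleton_iff,
        Set.mem_empty_iff_false, iff_false, not_and]
      rintro rfl; exact hv
  -- joins of (G,T) lift to joins of (Gh,Th)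
  have hjoinUp : ∀ F : Set (Sym2 V), IsJoin G T F → IsJoin Gh Th (F ∪ {s(r, s)}) := by
    intro F hF
    have hFsub := hF.1
    have hrsF : s(r, s) ∉ F := fun hh => hrsG (hFsub hh)
    constructor
    · intro e he
      rcases he with he | he
      · exact hGsub (hFsub he)
      · rw [Set.mem_singleton_iff] at he; exact he ▸ hrsGh
    · intro v
      have hsplit : incS (F ∪ {s(r, s)}) v = incS F v ∪ incS {s(r, s)} v := by
        ext f; simp only [incS, Set.mem_setOf_eq, Set.mem_union, Set.mem_singleton_iff]; tauto
      have hdisj : Disjoint (incS F v) (incS ({s(r, s)} : Set (Sym2 V)) v) := by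
        rw [Set.disjoint_left]
        rintro f hf1 ⟨hf2, -⟩
        rw [Set.mem_singleton_iff] at hf2
        exact hrsF (hf2 ▸ hf1.1)
      have hcardU : (incS (F ∪ {s(r, s)}) v).ncard =
          (incS F v).ncard + (incS ({s(r, s)} : Set (Sym2 V)) v).ncard := by
        rw [hsplit]
        exact Set.ncard_union_eq hdisj ((hfinE.subset hFsub).subset (incS_subset _ _))
          ((Set.finite_singleton _).subset (incS_subset _ _))
      show v ∈ Th ↔ Odd {e ∈ F ∪ {s(r, s)} | v ∈ e}.ncard
      have hch : {e ∈ F ∪ {s(r, s)} | v ∈ e} = incS (F ∪ {s(r, s)}) v := rfl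
      rw [hch, hcardU, hincRS v]
      by_cases hvr : v = r
      · subst hvr
        have h1 : incS F v = ∅ := by
          ext f; simp only [incS, Set.mem_setOf_eq, Set.mem_empty_iff_false, iff_false, not_and]
          intro hf hvf; exact (hnotrs f (hFsub hf)).1 hvf
        rw [if_pos (Sym2.mem_mk_left _ _), h1]
        simp only [Set.ncard_empty, Set.ncard_singleton, zero_add]
        simp only [hTh, Set.mem_union, Set.mem_insert_iff, Set.mem_singleton_iff]
        simp [Nat.odd_iff]
      by_cases hvs : v = s
      · subst hvs
        have h1 : incS F v = ∅ := by
          ext f; simp only [incS, Set.mem_setOf_eq, Set.mem_empty_iff_false, iff_false, not_and]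
          intro hf hvf; exact (hnotrs f (hFsub hf)).2 hvf
        rw [if_pos (Sym2.mem_mk_right _ _), h1]
        simp only [Set.ncard_empty, Set.ncard_singleton, zero_add]
        simp only [hTh, Set.mem_union, Set.mem_insert_iff, Set.mem_singleton_iff]
        simp [Nat.odd_iff]
      · have hv : v ∉ s(r, s) := by
          intro hh; rcases Sym2.mem_iff.mp hh with rfl | rfl
          exacts [hvr rfl, hvs rfl]
        rw [if_neg hv]
        simp only [Set.ncard_empty, add_zero]
        have hvT : v ∈ Th ↔ v ∈ T := by
          simp only [hTh, Set.mem_union, Set.mem_insert_iff, Set.mem_singleton_iff]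
          constructor
          · rintro (h | h | h)
            · exact h
            · exact absurd h hvr
            · exact absurd h hvs
          · exact fun h => Or.inl h
        rw [hvT]
        exact hF.2 v
  -- key decomposition of an arbitrary join of (Gh, Th)
  have hdecomp : ∀ Fhat : Set (Sym2 V), IsJoin Gh Th Fhat →
      ∃ S : Set V, S ⊆ X ∧
        Fhat = (Fhat ∩ G.edgeSet) ∪ {s(r, s)} ∪ (fun x => s(s, x)) '' S ∧
        IsJoin G (symmDiff T S) (Fhat ∩ G.edgeSet) ∧
        Fhat.ncard = (Fhat ∩ G.edgeSet).ncard + 1 + S.ncard := by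
    intro Fhat hFhat
    have hFsub := hFhat.1
    have hfinF : Fhat.Finite := hfinEh.subset hFsub
    -- r ∈ Th, and the only Gh-edge at r is s(r,s)
    have hincr : incS Fhat r ⊆ {s(r, s)} := by
      intro e he
      rcases (hedge e).mp (hFsub he.1) with h1 | h1 | ⟨x, hx, h1⟩
      · exact absurd he.2 (hnotrs e h1).1
      · exact h1
      · exfalso
        subst h1
        rcases Sym2.mem_iff.mp he.2 with rfl | rfl
        · exact hrs rfl
        · exact (hsX r hx).2 rfl
    have hrT : r ∈ Th := Or.inr (Or.inl rfl)
    have hoddr := (hFhat.2 r).mp hrT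
    have hrsIn : s(r, s) ∈ Fhat := by
      by_contra hcon
      have : incS Fhat r = ∅ := by
        rw [Set.eq_empty_iff_forall_notMem]
        intro e he
        have := hincr he
        rw [Set.mem_singleton_iff] at this
        exact hcon (this ▸ he.1)
      change Odd (incS Fhat r).ncard at hoddr
      rw [this] at hoddr
      simp [Nat.odd_iff] at hoddr
    set S : Set V := {x ∈ X | s(s, x) ∈ Fhat} with hSdef
    have hSX : S ⊆ X := fun x hx => hx.1
    have hinj : Set.InjOn (fun x => s(s, x)) S := by
      intro x hx y hy hxy
      simp only at hxy
      rcases Sym2.eq_iff.mp hxy with ⟨-, h⟩ | ⟨h1, -⟩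
      · exact h
      · exact absurd h1.symm (hsX y (hSX hy)).1
    set Esx : Set (Sym2 V) := (fun x => s(s, x)) '' S with hEsx
    set Fg : Set (Sym2 V) := Fhat ∩ G.edgeSet with hFg
    have hEsxF : Esx ⊆ Fhat := by
      rintro e ⟨x, hx, rfl⟩; exact hx.2
    have hsplitF : Fhat = Fg ∪ {s(r, s)} ∪ Esx := by
      apply Set.Subset.antisymm
      · intro e he
        rcases (hedge e).mp (hFsub he) with h1 | h1 | ⟨x, hx, h1⟩
        · exact Or.inl (Or.inl ⟨he, h1⟩)
        · exact Or.inl (Or.inr h1)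
        · exact Or.inr ⟨x, ⟨hx, h1 ▸ he⟩, h1.symm⟩
      · rintro e ((he | he) | he)
        · exact he.1
        · rw [Set.mem_singleton_iff] at he; exact he ▸ hrsIn
        · exact hEsxF he
    have hrsFg : s(r, s) ∉ Fg := fun hh => hrsG hh.2
    have hrsEsx : s(r, s) ∉ Esx := by
      rintro ⟨x, hx, hh⟩
      rcases Sym2.eq_iff.mp hh.symm with ⟨h1, -⟩ | ⟨h2, -⟩
      · exact hrs h1
      · exact (hsX x (hSX hx)).2 h2.symm
    have hEsxG : Disjoint Fg Esx := by
      rw [Set.disjoint_left]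
      rintro e he ⟨x, hx, rfl⟩
      exact (hnotrs _ he.2).2 (Sym2.mem_mk_left _ _)
    have hfinFg : Fg.Finite := hfinF.subset (fun e he => he.1)
    have hfinEsx : Esx.Finite := hfinF.subset hEsxF
    have hfinS : S.Finite := Set.toFinite _
    -- cardinality
    have hcardF : Fhat.ncard = Fg.ncard + 1 + S.ncard := by
      rw [hsplitF]
      have hd1 : Disjoint (Fg ∪ {s(r, s)}) Esx := by
        rw [Set.disjoint_union_left]
        refine ⟨hEsxG, ?_⟩
        rw [Set.disjoint_left]
        rintro e he
        rw [Set.mem_singleton_iff] at he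
        exact he ▸ hrsEsx
      have hd2 : Disjoint Fg ({s(r, s)} : Set (Sym2 V)) := by
        rw [Set.disjoint_left]
        intro e he hh
        rw [Set.mem_singleton_iff] at hh
        exact hrsFg (hh ▸ he)
      rw [Set.ncard_union_eq hd1 (hfinFg.union (Set.finite_singleton _)) hfinEsx,
        Set.ncard_union_eq hd2 hfinFg (Set.finite_singleton _),
        Set.ncard_singleton, Set.ncard_image_of_injOn hinj]
    -- incidence counting away from r, s
    have hincsplit : ∀ v : V, v ≠ r → v ≠ s →
        (incS Fhat v).ncard = (incS Fg v).ncard + (if v ∈ S then 1 else 0) := by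
      intro v hvr hvs
      have h1 : incS Fhat v = incS Fg v ∪ incS Esx v := by
        conv_lhs => rw [hsplitF]
        ext f
        simp only [incS, Set.mem_setOf_eq, Set.mem_union, Set.mem_singleton_iff]
        constructor
        · rintro ⟨(hf | hf) | hf, hvf⟩
          · exact Or.inl ⟨hf, hvf⟩
          · exfalso
            subst hf
            rcases Sym2.mem_iff.mp hvf with rfl | rfl
            exacts [hvr rfl, hvs rfl]
          · exact Or.inr ⟨hf, hvf⟩
        · rintro (⟨hf, hvf⟩ | ⟨hf, hvf⟩)
          · exact ⟨Or.inl (Or.inl hf), hvf⟩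
          · exact ⟨Or.inr hf, hvf⟩
      have h2 : incS Esx v = if v ∈ S then {s(s, v)} else ∅ := by
        split_ifs with hvS
        · ext f
          simp only [incS, Set.mem_setOf_eq, Set.mem_singleton_iff]
          constructor
          · rintro ⟨⟨x, hx, rfl⟩, hvf⟩
            rcases Sym2.mem_iff.mp hvf with rfl | rfl
            · exact absurd rfl hvs
            · rfl
          · rintro rfl
            exact ⟨⟨v, hvS, rfl⟩, Sym2.mem_mk_right _ _⟩
        · ext f
          simp only [incS, Set.mem_setOf_eq, Set.mem_empty_iff_false, iff_false, not_and]
          rintro ⟨x, hx, rfl⟩ hvf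
          rcases Sym2.mem_iff.mp hvf with rfl | rfl
          · exact hvs rfl
          · exact hvS hx
      have hdisj : Disjoint (incS Fg v) (incS Esx v) :=
        (hEsxG.mono (incS_subset _ _) (incS_subset _ _))
      rw [h1, Set.ncard_union_eq hdisj (hfinFg.subset (incS_subset _ _))
        (hfinEsx.subset (incS_subset _ _)), h2]
      split_ifs <;> simp
    -- Fg is a join of (G, T Δ S)
    have hjoinFg : IsJoin G (symmDiff T S) Fg := by
      constructor
      · exact fun e he => he.2
      · intro v
        show v ∈ symmDiff T S ↔ Odd (incS Fg v).ncard
        by_cases hvr : v = r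
        · subst hvr
          constructor
          · intro hh
            rw [Set.mem_symmDiff] at hh
            rcases hh with ⟨h1, -⟩ | ⟨h1, -⟩
            · exact absurd (hT h1) hr
            · exact absurd (hXV (hSX h1)) hr
          · intro hh
            exfalso
            have : incS Fg v = ∅ := by
              ext f
              simp only [incS, Set.mem_setOf_eq, Set.mem_empty_iff_false, iff_false, not_and]
              intro hf hvf
              exact (hnotrs f hf.2).1 hvf
            rw [this] at hh
            simp [Nat.odd_iff] at hh
        by_cases hvs : v = s
        · subst hvs
          constructor
          · intro hh
            rw [Set.mem_symmDiff] at hh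
            rcases hh with ⟨h1, -⟩ | ⟨h1, -⟩
            · exact absurd (hT h1) hs
            · exact absurd (hXV (hSX h1)) hs
          · intro hh
            exfalso
            have : incS Fg v = ∅ := by
              ext f
              simp only [incS, Set.mem_setOf_eq, Set.mem_empty_iff_false, iff_false, not_and]
              intro hf hvf
              exact (hnotrs f hf.2).2 hvf
            rw [this] at hh
            simp [Nat.odd_iff] at hh
        · have hvT : v ∈ Th ↔ v ∈ T := by
            simp only [hTh, Set.mem_union, Set.mem_insert_iff, Set.mem_singleton_iff]
            constructor
            · rintro (h | h | h)
              · exact h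
              · exact absurd h hvr
              · exact absurd h hvs
            · exact fun h => Or.inl h
          have hparF := (hFhat.2 v)
          change v ∈ Th ↔ Odd (incS Fhat v).ncard at hparF
          rw [hvT] at hparF
          have := hincsplit v hvr hvs
          rw [Set.mem_symmDiff]
          rw [this] at hparF
          by_cases hvS : v ∈ S
          · rw [if_pos hvS] at hparF
            rw [Nat.odd_add_one] at hparF
            constructor
            · rintro (⟨h1, h2⟩ | ⟨h1, h2⟩)
              · exact absurd hvS h2
              · by_contra hcon
                exact h2 (hparF.mpr hcon)
            · intro hh
              exact Or.inr ⟨hvS, fun hvT' => (hparF.mp hvT') hh⟩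
          · rw [if_neg hvS, add_zero] at hparF
            constructor
            · rintro (⟨h1, -⟩ | ⟨h1, -⟩)
              · exact hparF.mp h1
              · exact absurd h1 hvS
            · intro hh
              exact Or.inl ⟨hparF.mpr hh, hvS⟩
    exact ⟨S, hSX, hsplitF, hjoinFg, hcardF⟩
  -- every join of (Gh, Th) has at least |F₀| + 1 edges
  have hlower : ∀ Fhat : Set (Sym2 V), IsJoin Gh Th Fhat →
      F₀.ncard + 1 ≤ Fhat.ncard := by
    intro Fhat hFhat
    obtain ⟨S, hSX, -, hjoinFg, hcardF⟩ := hdecomp Fhat hFhat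
    set Fg : Set (Sym2 V) := Fhat ∩ G.edgeSet
    have hFgF0 : F₀.ncard ≤ Fg.ncard := by
      set D : Set (Sym2 V) := symmDiff Fg F₀ with hD
      have hjoinD : IsJoin G (symmDiff (symmDiff T S) T) D :=
        isJoin_symmDiff hfinE hjoinFg hF₀.1
      have hTS : symmDiff (symmDiff T S) T = S := by
        rw [symmDiff_comm T S, symmDiff_symmDiff_cancel_right]
      rw [hTS] at hjoinD
      have hDX : ∀ v, Odd (incS D v).ncard → v ∈ X := by
        intro v hv
        have := (hjoinD.2 v).mpr hv
        exact hSX this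
      have hw := main_nonneg hF₀ hext D.ncard D le_rfl hjoinD.1 hDX
      have hcast := card_eq_add_setW (F₀ := F₀) (F' := Fg)
        (hfinE.subset hF₀.1.1) (hfinE.subset hjoinFg.1)
      have : (F₀.ncard : ℤ) ≤ (Fg.ncard : ℤ) := by rw [hcast]; linarith
      exact_mod_cast this
    omega
  -- now the equivalence
  intro Fhat
  constructor
  · rintro ⟨hFhat, hmin⟩
    obtain ⟨S, hSX, hsplitF, hjoinFg, hcardF⟩ := hdecomp Fhat hFhat
    set Fg : Set (Sym2 V) := Fhat ∩ G.edgeSet with hFgdef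
    have hjoinF0 : IsJoin Gh Th (F₀ ∪ {s(r, s)}) := hjoinUp F₀ hF₀.1
    have hrsF0 : s(r, s) ∉ F₀ := fun hh => hrsG (hF₀.1.1 hh)
    have hcardF0 : Set.ncard (F₀ ∪ {s(r, s)} : Set (Sym2 V)) = F₀.ncard + 1 := by
      rw [Set.union_singleton, Set.ncard_insert_of_notMem hrsF0 (hfinE.subset hF₀.1.1)]
    have hup := hmin _ hjoinF0
    rw [hcardF0] at hup
    have hlow := hlower Fhat hFhat
    -- |Fhat| = |F₀| + 1, so S = ∅ and |Fg| = |F₀|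
    have hFgF0 : F₀.ncard ≤ Fg.ncard := by
      -- same argument as in hlower
      set D : Set (Sym2 V) := symmDiff Fg F₀ with hD
      have hjoinD : IsJoin G (symmDiff (symmDiff T S) T) D :=
        isJoin_symmDiff hfinE hjoinFg hF₀.1
      have hTS : symmDiff (symmDiff T S) T = S := by
        rw [symmDiff_comm T S, symmDiff_symmDiff_cancel_right]
      rw [hTS] at hjoinD
      have hDX : ∀ v, Odd (incS D v).ncard → v ∈ X := by
        intro v hv
        exact hSX ((hjoinD.2 v).mpr hv)
      have hw := main_nonneg hF₀ hext D.ncard D le_rfl hjoinD.1 hDX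
      have hcast := card_eq_add_setW (F₀ := F₀) (F' := Fg)
        (hfinE.subset hF₀.1.1) (hfinE.subset hjoinFg.1)
      have : (F₀.ncard : ℤ) ≤ (Fg.ncard : ℤ) := by rw [hcast]; linarith
      exact_mod_cast this
    have hS0 : S.ncard = 0 := by omega
    have hSempty : S = ∅ := by
      rw [← Set.ncard_eq_zero (Set.toFinite S)] at *
      exact hS0
    have hFgcard : Fg.ncard = F₀.ncard := by omega
    subst hSempty
    have hTS : symmDiff T (∅ : Set V) = T := by simp [Set.symmDiff_def]
    rw [hTS] at hjoinFg
    refine ⟨Fg, ⟨hjoinFg, ?_⟩, ?_⟩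
    · intro F' hF'
      rw [hFgcard]
      exact hF₀.2 F' hF'
    · rw [hsplitF]
      simp only [Set.image_empty, Set.union_empty]
  · rintro ⟨F, hF, rfl⟩
    have hFcard : F.ncard = F₀.ncard := le_antisymm (hF.2 F₀ hF₀.1) (hF₀.2 F hF.1)
    have hrsF : s(r, s) ∉ F := fun hh => hrsG (hF.1.1 hh)
    have hcardF : (F ∪ {s(r, s)}).ncard = F₀.ncard + 1 := by
      rw [Set.union_singleton, Set.ncard_insert_of_notMem hrsF (hfinE.subset hF.1.1), hFcard]
    refine ⟨hjoinUp F hF.1, ?_⟩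
    intro F' hF'
    rw [hcardF]
    exact hlower F' hF'
end

section
/- Let (G,T) be a bipartite graft with color classes A and B, let F be a minimum join of (G,T), and let X ⊆ V(G) be a maximal bipartitic extreme set. Let (Ĝ, T̂) be the rootlization of (G,T) by the mount X, the root r, and the attachment s, and let F̂ = F ∪ {rs}, X̂ = X ∪ {r}, D̂_X = D_X ∪ {s}. Then the subgraph of Ĝ induced by X̂ ∪ D̂_X is the initial component of r in (Ĝ,T̂), and A(r) = X̂ and D(r) = D̂_X hold (computed in (Ĝ,T̂) with respect to F̂). -/
open scoped Classical

variable {V : Type*}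

set_option linter.unusedSectionVars false
namespace Stmt15

open SimpleGraph Walk


open SimpleGraph Walk

variable {G H : SimpleGraph V} {F F' : Set (Sym2 V)} {x y z : V}

lemma walkWeight_nil : walkWeight F (Walk.nil : G.Walk x x) = 0 := by
  simp [walkWeight]

lemma walkWeight_cons (h : G.Adj x y) (p : G.Walk y z) :
    walkWeight F (Walk.cons h p) =
      (if s(x, y) ∈ F then (-1 : ℤ) else 1) + walkWeight F p := by
  by_cases he : s(x, y) ∈ F <;> simp [walkWeight, he] <;> ring

lemma walkWeight_append (p : G.Walk x y) (q : G.Walk y z) :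
    walkWeight F (p.append q) = walkWeight F p + walkWeight F q := by
  simp [walkWeight, Walk.edges_append, List.filter_append]
  ring

lemma walkWeight_reverse (p : G.Walk x y) :
    walkWeight F p.reverse = walkWeight F p := by
  simp [walkWeight, Walk.edges_reverse, List.filter_reverse]

lemma walkWeight_congr (p : G.Walk x y) (h : ∀ e ∈ p.edges, e ∈ F ↔ e ∈ F') :
    walkWeight F p = walkWeight F' p := by
  unfold walkWeight
  have h1 : p.edges.filter (fun e => decide (e ∉ F)) =
      p.edges.filter (fun e => decide (e ∉ F')) :=
    List.filter_congr (fun e he => by simp [h e he])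
  have h2 : p.edges.filter (fun e => decide (e ∈ F)) =
      p.edges.filter (fun e => decide (e ∈ F')) :=
    List.filter_congr (fun e he => by simp [h e he])
  rw [h1, h2]

lemma walkWeight_transfer (p : G.Walk x y) (hp : ∀ e ∈ p.edges, e ∈ H.edgeSet) :
    walkWeight F (p.transfer H hp) = walkWeight F p := by
  simp [walkWeight, Walk.edges_transfer]

lemma filter_length_add {α : Type*} (P : α → Prop) [DecidablePred P] (l : List α) :
    (l.filter fun a => P a).length + (l.filter fun a => ¬ P a).length = l.length := by
  have := List.length_eq_length_filter_add (l := l) (fun a => decide (P a))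
  have h2 : (l.filter fun a => ¬ P a) = l.filter (fun a => !decide (P a)) := by
    simp [decide_not]
  rw [h2]
  omega

lemma walkWeight_eq_length_sub (p : G.Walk x y) :
    walkWeight F p = (p.length : ℤ) - 2 * ((p.edges.filter fun e => e ∈ F).length : ℤ) := by
  have := filter_length_add (fun e => e ∈ F) p.edges
  rw [Walk.length_edges] at this
  unfold walkWeight
  omega

lemma neg_length_le_walkWeight (p : G.Walk x y) :
    -(p.length : ℤ) ≤ walkWeight F p := by
  have := filter_length_add (fun e => e ∈ F) p.edges
  rw [Walk.length_edges] at this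
  unfold walkWeight
  omega

section Fin
variable [Fintype V]

lemma distF_bddBelow :
    BddBelow {w : ℤ | ∃ p : G.Walk x y, p.IsPath ∧ walkWeight F p = w} := by
  refine ⟨-(Fintype.card V : ℤ), fun w hw => ?_⟩
  obtain ⟨p, hp, rfl⟩ := hw
  calc -(Fintype.card V : ℤ) ≤ -(p.length : ℤ) := by
        have := hp.length_lt; omega
    _ ≤ walkWeight F p := neg_length_le_walkWeight p

lemma distF_le_weight {p : G.Walk x y} (hp : p.IsPath) :
    distF G F x y ≤ walkWeight F p :=
  csInf_le distF_bddBelow ⟨p, hp, rfl⟩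

lemma le_distF {c : ℤ} (hne : ∃ p : G.Walk x y, p.IsPath)
    (h : ∀ p : G.Walk x y, p.IsPath → c ≤ walkWeight F p) :
    c ≤ distF G F x y := by
  obtain ⟨p, hp⟩ := hne
  exact le_csInf ⟨walkWeight F p, p, hp, rfl⟩ (by rintro w ⟨q, hq, rfl⟩; exact h q hq)

lemma distF_spec (hne : ∃ p : G.Walk x y, p.IsPath) :
    ∃ p : G.Walk x y, p.IsPath ∧ walkWeight F p = distF G F x y := by
  obtain ⟨p, hp⟩ := hne
  have := Int.csInf_mem (s := {w : ℤ | ∃ p : G.Walk x y, p.IsPath ∧ walkWeight F p = w})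
    ⟨walkWeight F p, p, hp, rfl⟩ distF_bddBelow
  exact this

lemma distF_self : distF G F x x = 0 := by
  have : {w : ℤ | ∃ p : G.Walk x x, p.IsPath ∧ walkWeight F p = w} = {0} := by
    ext w
    constructor
    · rintro ⟨p, hp, rfl⟩
      rw [(Walk.isPath_iff_eq_nil (p := p)).1 hp, walkWeight_nil]; rfl
    · rintro rfl
      exact ⟨Walk.nil, Walk.IsPath.nil, walkWeight_nil⟩
  rw [distF, this, csInf_singleton]

lemma distF_symm : distF G F x y = distF G F y x := by
  have : {w : ℤ | ∃ p : G.Walk x y, p.IsPath ∧ walkWeight F p = w} =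
      {w : ℤ | ∃ p : G.Walk y x, p.IsPath ∧ walkWeight F p = w} := by
    ext w
    constructor
    · rintro ⟨p, hp, rfl⟩
      exact ⟨p.reverse, hp.reverse, walkWeight_reverse p⟩
    · rintro ⟨p, hp, rfl⟩
      exact ⟨p.reverse, hp.reverse, walkWeight_reverse p⟩
  rw [distF, this, distF]

lemma distF_eq_zero_of_no_path (h : ¬ ∃ p : G.Walk x y, p.IsPath) :
    distF G F x y = 0 := by
  have : {w : ℤ | ∃ p : G.Walk x y, p.IsPath ∧ walkWeight F p = w} = ∅ := by
    ext w; simp only [Set.mem_setOf_eq, Set.mem_empty_iff_false, iff_false]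
    rintro ⟨p, hp, _⟩; exact h ⟨p, hp⟩
  rw [distF, this, Int.csInf_empty]

end Fin

lemma mem_ends_edge_eq {u v : V} (p : G.Walk u v) (hp : p.IsPath)
    (he : s(v, u) ∈ p.edges) :
    walkWeight F p = (if s(v, u) ∈ F then (-1 : ℤ) else 1) := by
  cases p with
  | nil => simp at he
  | @cons _ c _ h t =>
    rw [Walk.edges_cons] at he
    rcases List.mem_cons.1 he with heq | hmem
    · have hcv : c = v := by
        rcases Sym2.eq_iff.1 heq with ⟨h1, h2⟩ | ⟨h1, h2⟩
        · exact (h2.symm.trans h1.symm)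
        · exact h1.symm
      subst hcv
      have ht : t = Walk.nil := (Walk.isPath_iff_eq_nil (p := t)).1 hp.of_cons
      subst ht
      rw [walkWeight_cons, walkWeight_nil, Sym2.eq_swap]
      ring
    · exfalso
      have hu : u ∈ t.support := t.snd_mem_support_of_mem_edges hmem
      exact ((Walk.cons_isPath_iff h t).1 hp).2 hu

lemma chain'_mid {α : Type*} {R : α → α → Prop} :
    ∀ (L₁ : List α) (b g : α) (L₂ : List α), List.Chain' R (L₁ ++ b :: g :: L₂) → R b g := by
  intro L₁
  induction L₁ with
  | nil => intro b g L₂ h; exact (List.isChain_cons_cons.1 h).1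
  | cons c L ih => intro b g L₂ h; exact ih b g L₂ h.tail

lemma exists_crossing {P : V → Prop} :
    ∀ (L : List V) (hne : L ≠ []), P (L.getLast hne) → (∃ z ∈ L, ¬ P z) →
      ∃ (L₁ : List V) (b g : V) (L₂ : List V), L = L₁ ++ b :: g :: L₂ ∧ ¬ P b ∧ P g := by
  intro L
  induction L with
  | nil => intro h; exact absurd rfl h
  | cons a L ih =>
    intro hne hlast hbad
    by_cases ha : P a
    · have hbad' : ∃ z ∈ L, ¬ P z := by
        rcases hbad with ⟨z, hz, hnz⟩
        rcases List.mem_cons.1 hz with rfl | hz'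
        · exact absurd ha hnz
        · exact ⟨z, hz', hnz⟩
      have hLne : L ≠ [] := by
        rintro rfl
        rcases hbad' with ⟨z, hz, _⟩
        simp at hz
      have hlast' : P (L.getLast hLne) := by
        rwa [List.getLast_cons hLne] at hlast
      obtain ⟨L₁, b, g, L₂, heq, hb, hg⟩ := ih hLne hlast' hbad'
      exact ⟨a :: L₁, b, g, L₂, by rw [heq]; rfl, hb, hg⟩
    · cases L with
      | nil => exact absurd (by simpa using hlast) ha
      | cons c L' =>
        by_cases hc : P c
        · exact ⟨[], a, c, L', rfl, ha, hc⟩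
        · have hLne : (c :: L') ≠ [] := List.cons_ne_nil c L'
          have hlast' : P ((c :: L').getLast hLne) := by
            rwa [List.getLast_cons hLne] at hlast
          obtain ⟨L₁, b, g, L₂, heq, hb, hg⟩ :=
            ih hLne hlast' ⟨c, List.mem_cons_self (a := c) (l := L'), hc⟩
          exact ⟨a :: L₁, b, g, L₂, by rw [heq]; rfl, hb, hg⟩

lemma reachable_restrict {H : SimpleGraph V} {S : Set V} :
    ∀ {u v : V} (p : H.Walk u v), (∀ z ∈ p.support, z ∈ S) →
      (gRestrict H S).Reachable u v := by
  intro u v p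
  induction p with
  | nil => intro _; exact Reachable.refl _
  | @cons u c v h t ih =>
    intro hsupp
    have h1 : (gRestrict H S).Adj u c :=
      ⟨h, hsupp u (Walk.start_mem_support _),
        hsupp c (by rw [Walk.support_cons]; exact List.mem_cons_of_mem _ t.start_mem_support)⟩
    have h2 : (gRestrict H S).Reachable c v :=
      ih fun z hz => hsupp z (by rw [Walk.support_cons]; exact List.mem_cons_of_mem _ hz)
    exact Reachable.trans ⟨Walk.cons h1 Walk.nil⟩ h2

lemma restrict_end {H : SimpleGraph V} {S : Set V} :
    ∀ {u v : V}, (gRestrict H S).Walk u v → v = u ∨ v ∈ S := by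
  intro u v w
  induction w with
  | nil => exact Or.inl rfl
  | @cons a c b h t ih =>
    rcases ih with heq | hv
    · rw [heq]; exact Or.inr h.2.2
    · exact Or.inr hv

section CycleLemma
variable {G : SimpleGraph V} {F : Set (Sym2 V)}

lemma countP_edges_mod_two (v : V) : ∀ {a b : V} (p : G.Walk a b),
    (p.edges.countP (fun e => v ∈ e)) % 2 =
      ((if v = a then 1 else 0) + (if v = b then 1 else 0)) % 2 := by
  intro a b p
  induction p with
  | nil =>
    simp only [Walk.edges_nil, List.countP_nil, Nat.zero_mod]
    split_ifs <;> rfl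
  | @cons a c b h t ih =>
    rw [Walk.edges_cons, List.countP_cons]
    have hne : a ≠ c := h.ne
    have hval : (if (fun e => decide (v ∈ e)) s(a, c) = true then 1 else 0) =
        (if v = a then 1 else 0) + (if v = c then 1 else 0) := by
      by_cases hva : v = a
      · by_cases hvc : v = c
        · exact absurd (hva.symm.trans hvc) hne
        · simp [Sym2.mem_iff, hva, hvc, hne]
      · by_cases hvc : v = c
        · simp [Sym2.mem_iff, hva, hvc, Ne.symm hne]
        · simp [Sym2.mem_iff, hva, hvc]
    rw [hval]
    split_ifs at ih ⊢ <;> omega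

lemma even_countP_closed (v : V) {b : V} (c : G.Walk b b) :
    Even (c.edges.countP (fun e => v ∈ e)) := by
  have h := countP_edges_mod_two v c
  rw [Nat.even_iff]
  by_cases hvb : v = b
  · subst hvb
    simpa using h
  · simpa [hvb] using h

lemma even_filter_closed (v : V) {b : V} (c : G.Walk b b) :
    Even ((c.edges.filter (fun e => v ∈ e)).length) := by
  rw [← List.countP_eq_length_filter]
  exact even_countP_closed v c

lemma ncard_mem_list {α : Type*} (l : List α) (hl : l.Nodup) (P : α → Prop) [DecidablePred P] :
    {e | e ∈ l ∧ P e}.ncard = (l.filter (fun e => P e)).length := by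
  have h1 : {e | e ∈ l ∧ P e} = ↑((l.filter (fun e => P e)).toFinset) := by
    ext e; simp [List.mem_filter]
  rw [h1, Set.ncard_coe_finset]
  exact List.toFinset_card_of_nodup (hl.filter _)

lemma ncard_mem_list_mem (l : List (Sym2 V)) (hl : l.Nodup) (S : Set (Sym2 V)) :
    {e | e ∈ l ∧ e ∈ S}.ncard = (l.filter (fun e => e ∈ S)).length :=
  ncard_mem_list l hl _

lemma ncard_mem_list_notmem (l : List (Sym2 V)) (hl : l.Nodup) (S : Set (Sym2 V)) :
    {e | e ∈ l ∧ e ∉ S}.ncard = (l.filter (fun e => e ∉ S)).length :=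
  ncard_mem_list l hl _

lemma ncard_mem_list_vmem (v : V) (l : List (Sym2 V)) (hl : l.Nodup) :
    {e | e ∈ l ∧ v ∈ e}.ncard = (l.filter (fun e => v ∈ e)).length :=
  ncard_mem_list l hl _

lemma odd_symmdiff_iff {α : Type*} [Fintype α] {A B : Set α} (hB : Even B.ncard) :
    Odd (((A \ B) ∪ (B \ A)).ncard) ↔ Odd A.ncard := by
  have h1 : ((A \ B) ∪ (B \ A)).ncard = (A \ B).ncard + (B \ A).ncard :=
    Set.ncard_union_eq disjoint_sdiff_sdiff (Set.toFinite _) (Set.toFinite _)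
  have h2 := Set.ncard_inter_add_ncard_diff_eq_ncard A B (Set.toFinite _)
  have h3 := Set.ncard_inter_add_ncard_diff_eq_ncard B A (Set.toFinite _)
  have h4 : (A ∩ B).ncard = (B ∩ A).ncard := by rw [Set.inter_comm]
  rw [Nat.even_iff] at hB
  rw [h1, Nat.odd_iff, Nat.odd_iff]
  omega

lemma minjoin_cycle [Fintype V] {T : Set V} (hF : IsMinJoin G T F) {a b : V}
    (q : G.Walk a b) (hq : q.IsPath) (hadj : G.Adj b a) (he : s(b, a) ∉ q.edges) :
    0 ≤ (if s(b, a) ∈ F then (-1 : ℤ) else 1) + walkWeight F q := by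
  set c : G.Walk b b := Walk.cons hadj q with hc
  have hnodupE : c.edges.Nodup :=
    ((Walk.cons_isCycle_iff q hadj).2 ⟨hq, he⟩).isTrail.edges_nodup
  set Ec : Set (Sym2 V) := {e | e ∈ c.edges} with hEc
  set F' : Set (Sym2 V) := (F \ Ec) ∪ (Ec \ F) with hF'
  have hjoin : IsJoin G T F' := by
    constructor
    · rintro e (⟨heF, -⟩ | ⟨heE, -⟩)
      · exact hF.1.1 heF
      · exact c.edges_subset_edgeSet heE
    · intro v
      rw [hF.1.2 v]
      have hsv : {e ∈ F' | v ∈ e} =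
          ({e ∈ F | v ∈ e} \ {e ∈ Ec | v ∈ e}) ∪ ({e ∈ Ec | v ∈ e} \ {e ∈ F | v ∈ e}) := by
        ext e
        simp only [hF', Set.mem_union, Set.mem_diff, Set.mem_setOf_eq, Set.mem_sep_iff]
        tauto
      have hevenEc : Even {e ∈ Ec | v ∈ e}.ncard := by
        have h5 : {e ∈ Ec | v ∈ e} = {e | e ∈ c.edges ∧ v ∈ e} := rfl
        rw [h5, ncard_mem_list_vmem v c.edges hnodupE]
        exact even_filter_closed v c
      rw [hsv, odd_symmdiff_iff hevenEc]
  have hle := hF.2 F' hjoin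
  have hin : ((c.edges.filter (fun e => e ∈ F)).length : ℤ) = ((F ∩ Ec).ncard : ℤ) := by
    have hset2 : {e | e ∈ c.edges ∧ e ∈ F} = F ∩ Ec :=
      Set.ext fun e => ⟨fun h => ⟨h.2, h.1⟩, fun h => ⟨h.2, h.1⟩⟩
    rw [← ncard_mem_list_mem c.edges hnodupE F, hset2]
  have hout : ((c.edges.filter (fun e => e ∉ F)).length : ℤ) = ((Ec \ F).ncard : ℤ) := by
    have hset : {e | e ∈ c.edges ∧ e ∉ F} = Ec \ F := rfl
    rw [← ncard_mem_list_notmem c.edges hnodupE F, hset]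
  have hwF : walkWeight F c = ((Ec \ F).ncard : ℤ) - ((F ∩ Ec).ncard : ℤ) := by
    unfold walkWeight
    rw [hin, hout]
  have hd : F'.ncard = (F \ Ec).ncard + (Ec \ F).ncard :=
    Set.ncard_union_eq disjoint_sdiff_sdiff (Set.toFinite _) (Set.toFinite _)
  have h2 := Set.ncard_inter_add_ncard_diff_eq_ncard F Ec (Set.toFinite _)
  have hwc' : 0 ≤ walkWeight F c := by
    rw [hwF]; omega
  rw [hc, walkWeight_cons] at hwc'
  exact hwc'

end CycleLemma

section Ctx
variable {G : SimpleGraph V} {Vg X : Set V} {F : Set (Sym2 V)} {r s : V}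
variable (hGV : ∀ v w : V, G.Adj v w → v ∈ Vg ∧ w ∈ Vg)
variable (hXV : X ⊆ Vg) (hr : r ∉ Vg) (hs : s ∉ Vg) (hrs : r ≠ s)
variable (hFE : F ⊆ G.edgeSet)

lemma hat_adj_of_G {u v : V} (h : G.Adj u v) : (rootlize G X r s).Adj u v := by
  rw [rootlize, SimpleGraph.fromRel_adj]
  exact ⟨h.ne, Or.inl (Or.inl h)⟩

lemma hat_le : G ≤ rootlize G X r s := fun {_ _} h => hat_adj_of_G h

include hrs in
lemma hat_adj_rs : (rootlize G X r s).Adj r s := by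
  rw [rootlize, SimpleGraph.fromRel_adj]
  exact ⟨hrs, Or.inl (Or.inr (Or.inl ⟨rfl, rfl⟩))⟩

include hXV hs in
lemma hat_adj_sx {x : V} (hx : x ∈ X) : (rootlize G X r s).Adj s x := by
  rw [rootlize, SimpleGraph.fromRel_adj]
  exact ⟨fun h => hs (hXV (h ▸ hx)), Or.inl (Or.inr (Or.inr ⟨rfl, hx⟩))⟩

include hGV hr hs in
lemma hat_adj_elim {u v : V} (h : (rootlize G X r s).Adj u v) :
    G.Adj u v ∨ (u = r ∧ v = s) ∨ (u = s ∧ v = r) ∨ (u = s ∧ v ∈ X) ∨ (v = s ∧ u ∈ X) := by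
  rw [rootlize, SimpleGraph.fromRel_adj] at h
  obtain ⟨hne, h | h⟩ := h
  · rcases h with h | ⟨rfl, rfl⟩ | ⟨rfl, hv⟩
    · exact Or.inl h
    · exact Or.inr (Or.inl ⟨rfl, rfl⟩)
    · exact Or.inr (Or.inr (Or.inr (Or.inl ⟨rfl, hv⟩)))
  · rcases h with h | ⟨rfl, rfl⟩ | ⟨rfl, hv⟩
    · exact Or.inl h.symm
    · exact Or.inr (Or.inr (Or.inl ⟨rfl, rfl⟩))
    · exact Or.inr (Or.inr (Or.inr (Or.inr ⟨rfl, hv⟩)))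

include hGV in
lemma walk_support_Vg {x y : V} (q : G.Walk x y) (hx : x ∈ Vg) :
    ∀ z ∈ q.support, z ∈ Vg := by
  induction q with
  | nil => intro z hz; rw [Walk.support_nil, List.mem_singleton] at hz; exact hz ▸ hx
  | cons h t ih =>
      intro z hz
      rw [Walk.support_cons, List.mem_cons] at hz
      rcases hz with rfl | hz
      · exact hx
      · exact ih (hGV _ _ h).2 z hz

include hGV hr in
lemma hatF_not_edge : s(r, s) ∉ G.edgeSet := fun h => hr (hGV r s ((G.mem_edgeSet).1 h)).1

include hGV hr hFE in
lemma mem_hatF_iff_of_G {e : Sym2 V} (he : e ∈ G.edgeSet) :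
    e ∈ F ∪ {s(r, s)} ↔ e ∈ F := by
  refine ⟨?_, fun h => Or.inl h⟩
  rintro (h | h)
  · exact h
  · rw [Set.mem_singleton_iff] at h
    exact absurd (h ▸ he) (hatF_not_edge hGV hr)

include hGV hXV hr hs hrs hFE in
lemma build_path {x y : V} (hx : x ∈ X) (q : G.Walk x y) (hq : q.IsPath) :
    ∃ p : (rootlize G X r s).Walk r y, p.IsPath ∧ p.support = r :: s :: q.support ∧
      walkWeight (F ∪ {s(r, s)}) p = walkWeight F q ∧ p.length = q.length + 2 := by
  have hsub : ∀ e ∈ q.edges, e ∈ (rootlize G X r s).edgeSet :=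
    fun e he => edgeSet_mono hat_le (q.edges_subset_edgeSet he)
  set q' := q.transfer (rootlize G X r s) hsub with hq'
  refine ⟨Walk.cons (hat_adj_rs hrs) (Walk.cons (hat_adj_sx hXV hs hx) q'), ?_, ?_, ?_, ?_⟩
  · rw [Walk.isPath_def, Walk.support_cons, Walk.support_cons, Walk.support_transfer]
    have hVg := walk_support_Vg hGV q (hXV hx)
    refine List.Nodup.cons ?_ (List.Nodup.cons ?_ hq.support_nodup)
    · intro h
      rcases List.mem_cons.1 h with rfl | h
      · exact hrs rfl
      · exact hr (hVg r h)
    · exact fun h => hs (hVg s h)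
  · rw [Walk.support_cons, Walk.support_cons, Walk.support_transfer]
  · rw [walkWeight_cons, walkWeight_cons]
    have h1 : s(r, s) ∈ F ∪ {s(r, s)} := Or.inr rfl
    have h2 : s(s, x) ∉ F ∪ {s(r, s)} := by
      rintro (h | h)
      · exact hs (hGV s x ((G.mem_edgeSet).1 (hFE h))).1
      · rw [Set.mem_singleton_iff, Sym2.eq_iff] at h
        rcases h with ⟨rfl, _⟩ | ⟨_, rfl⟩
        · exact hrs rfl
        · exact hr (hXV hx)
    rw [if_pos h1, if_neg h2]
    have h3 : walkWeight (F ∪ {s(r, s)}) q' = walkWeight F q := by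
      rw [hq', walkWeight_transfer]
      exact walkWeight_congr q fun e he =>
        mem_hatF_iff_of_G hGV hr hFE (q.edges_subset_edgeSet he)
    rw [h3]; ring
  · rw [Walk.length_cons, Walk.length_cons, Walk.length_transfer]

include hGV hXV hr hs hrs hFE in
lemma decomp_path {y : V} (hyr : y ≠ r) (hys : y ≠ s)
    (p : (rootlize G X r s).Walk r y) (hp : p.IsPath) :
    ∃ x ∈ X, ∃ q : G.Walk x y, q.IsPath ∧ p.support = r :: s :: q.support ∧
      walkWeight (F ∪ {s(r, s)}) p = walkWeight F q := by
  cases p with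
  | nil => exact absurd rfl hyr
  | @cons _ c _ h₁ t₁ =>
    have hcs : s = c := by
      rcases hat_adj_elim hGV hr hs h₁ with hG | ⟨_, rfl⟩ | ⟨hr', _⟩ | ⟨hr', _⟩ | ⟨rfl, hrX⟩
      · exact absurd (hGV _ _ hG).1 hr
      · rfl
      · exact absurd hr' hrs
      · exact absurd hr' hrs
      · exact absurd (hXV hrX) hr
    subst hcs
    cases t₁ with
    | nil => exact absurd rfl hys
    | @cons _ c₂ _ h₂ t₂ =>
      have hnodup := hp.support_nodup
      rw [Walk.support_cons, Walk.support_cons] at hnodup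
      have hrns : r ∉ s :: t₂.support := by
        intro h; exact (List.nodup_cons.1 hnodup).1 (by simpa using h)
      have hsnt : s ∉ t₂.support := by
        intro h
        exact (List.nodup_cons.1 (List.nodup_cons.1 hnodup).2).1 (by simpa using h)
      have hrnt : r ∉ t₂.support := fun h => hrns (List.mem_cons_of_mem _ h)
      have hx : c₂ ∈ X := by
        rcases hat_adj_elim hGV hr hs h₂ with hG | ⟨hr', _⟩ | ⟨_, rfl⟩ | ⟨_, hc⟩ | ⟨hc, hsx⟩
        · exact absurd (hGV _ _ hG).1 hs
        · exact absurd hr'.symm hrs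
        · exact absurd (t₂.start_mem_support) hrnt
        · exact hc
        · exact absurd (hXV hsx) hs
      have hedges : ∀ e ∈ t₂.edges, e ∈ G.edgeSet := by
        intro e he
        induction e using Sym2.ind with
        | _ a b =>
          have hadj : (rootlize G X r s).Adj a b :=
            ((rootlize G X r s).mem_edgeSet).1 (t₂.edges_subset_edgeSet he)
          have ha : a ∈ t₂.support := t₂.fst_mem_support_of_mem_edges he
          have hb : b ∈ t₂.support := t₂.snd_mem_support_of_mem_edges he
          rcases hat_adj_elim hGV hr hs hadj with
            hG | ⟨rfl, _⟩ | ⟨rfl, _⟩ | ⟨rfl, _⟩ | ⟨rfl, _⟩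
          · exact (G.mem_edgeSet).2 hG
          · exact absurd ha hrnt
          · exact absurd ha hsnt
          · exact absurd ha hsnt
          · exact absurd hb hsnt
      refine ⟨c₂, hx, t₂.transfer G hedges, ?_, ?_, ?_⟩
      · rw [Walk.isPath_def, Walk.support_transfer]
        exact (List.nodup_cons.1 (List.nodup_cons.1 hnodup).2).2
      · rw [Walk.support_cons, Walk.support_cons, Walk.support_transfer]
      · rw [walkWeight_cons, walkWeight_cons]
        have h1 : s(r, s) ∈ F ∪ {s(r, s)} := Or.inr rfl
        have h2 : s(s, c₂) ∉ F ∪ {s(r, s)} := by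
          rintro (h | h)
          · exact hs (hGV s c₂ ((G.mem_edgeSet).1 (hFE h))).1
          · rw [Set.mem_singleton_iff, Sym2.eq_iff] at h
            rcases h with ⟨rfl, _⟩ | ⟨_, rfl⟩
            · exact hrs rfl
            · exact hr (hXV hx)
        rw [if_pos h1, if_neg h2]
        have h3 : walkWeight (F ∪ {s(r, s)}) (t₂.transfer G hedges) =
            walkWeight F (t₂.transfer G hedges) :=
          walkWeight_congr _ fun e he =>
            mem_hatF_iff_of_G hGV hr hFE ((t₂.transfer G hedges).edges_subset_edgeSet he)
        have h4 : walkWeight (F ∪ {s(r, s)}) (t₂.transfer G hedges) =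
            walkWeight (F ∪ {s(r, s)}) t₂ := walkWeight_transfer _ _
        rw [← h4, h3]
        ring

include hrs in
lemma path_to_s (p : (rootlize G X r s).Walk r s) (hp : p.IsPath)
    (hGV : ∀ v w : V, G.Adj v w → v ∈ Vg ∧ w ∈ Vg) (hXV : X ⊆ Vg)
    (hr : r ∉ Vg) (hs : s ∉ Vg) :
    walkWeight (F ∪ {s(r, s)}) p = -1 ∧ p.support = [r, s] := by
  cases p with
  | nil => exact absurd rfl hrs
  | @cons _ c _ h₁ t₁ =>
    have hcs : s = c := by
      rcases hat_adj_elim hGV hr hs h₁ with hG | ⟨_, rfl⟩ | ⟨hr', _⟩ | ⟨hr', _⟩ | ⟨rfl, hrX⟩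
      · exact absurd (hGV _ _ hG).1 hr
      · rfl
      · exact absurd hr' hrs
      · exact absurd hr' hrs
      · exact absurd (hXV hrX) hr
    subst hcs
    have : t₁ = Walk.nil := (Walk.isPath_iff_eq_nil (p := t₁)).1 hp.of_cons
    subst this
    refine ⟨?_, ?_⟩
    · rw [walkWeight_cons, walkWeight_nil,
        if_pos (show s(r,s) ∈ F ∪ {s(r,s)} from Or.inr rfl)]
      norm_num
    · rw [Walk.support_cons, Walk.support_nil]

lemma bip_parity {A B : Set V} (hdisj : Disjoint A B)
    (hadj : ∀ v w : V, G.Adj v w → (v ∈ A ∧ w ∈ B) ∨ (v ∈ B ∧ w ∈ A)) :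
    ∀ {u v : V} (q : G.Walk u v),
      (((u ∈ A ∧ v ∈ A) ∨ (u ∈ B ∧ v ∈ B)) → Even q.length) ∧
      (((u ∈ A ∧ v ∈ B) ∨ (u ∈ B ∧ v ∈ A)) → Odd q.length) := by
  have hd : ∀ z : V, z ∈ A → z ∈ B → False :=
    fun z h1 h2 => Set.disjoint_left.1 hdisj h1 h2
  intro u v q
  induction q with
  | nil =>
    refine ⟨fun _ => Even.zero, ?_⟩
    rintro (⟨h1, h2⟩ | ⟨h1, h2⟩)
    · exact absurd h2 (fun hh => hd _ h1 hh)
    · exact absurd h1 (fun hh => hd _ h2 hh)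
  | @cons u c v h t ih =>
    rw [Walk.length_cons]
    rcases hadj _ _ h with ⟨huA, hcB⟩ | ⟨huB, hcA⟩
    · constructor
      · rintro (⟨h1, h2⟩ | ⟨h1, h2⟩)
        · exact (ih.2 (Or.inr ⟨hcB, h2⟩)).add_one
        · exact absurd huA (fun hh => hd _ hh h1)
      · rintro (⟨h1, h2⟩ | ⟨h1, h2⟩)
        · exact (ih.1 (Or.inr ⟨hcB, h2⟩)).add_one
        · exact absurd huA (fun hh => hd _ hh h1)
    · constructor
      · rintro (⟨h1, h2⟩ | ⟨h1, h2⟩)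
        · exact absurd huB (fun hh => hd _ h1 hh)
        · exact (ih.2 (Or.inl ⟨hcA, h2⟩)).add_one
      · rintro (⟨h1, h2⟩ | ⟨h1, h2⟩)
        · exact absurd huB (fun hh => hd _ h1 hh)
        · exact (ih.1 (Or.inl ⟨hcA, h2⟩)).add_one

lemma walkWeight_ne_zero_of_odd {x y : V} {q : G.Walk x y} (h : Odd q.length) :
    walkWeight F q ≠ 0 := by
  intro h0
  rw [walkWeight_eq_length_sub] at h0
  have heven : Even (q.length : ℤ) := by
    refine ⟨((q.edges.filter fun e => e ∈ F).length : ℤ), by omega⟩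
  rw [Int.even_coe_nat] at heven
  exact (Nat.not_even_iff_odd.2 h) heven

variable [Fintype V]

include hGV hXV hr hs hrs hFE in
lemma dhat_le_of_walk {x y : V} (hx : x ∈ X) (q : G.Walk x y) (hq : q.IsPath) :
    distF (rootlize G X r s) (F ∪ {s(r, s)}) r y ≤ walkWeight F q := by
  obtain ⟨p, hp, _, hw, _⟩ := build_path hGV hXV hr hs hrs hFE hx q hq
  rw [← hw]; exact distF_le_weight hp

include hGV hXV hr hs hrs hFE in
lemma dhat_s_eq : distF (rootlize G X r s) (F ∪ {s(r, s)}) r s = -1 := by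
  have hp0 : (Walk.cons (hat_adj_rs hrs) (Walk.nil : (rootlize G X r s).Walk s s)).IsPath := by
    rw [Walk.cons_isPath_iff]
    exact ⟨Walk.IsPath.nil, by simp [hrs]⟩
  have hw0 : walkWeight (F ∪ {s(r, s)})
      (Walk.cons (hat_adj_rs hrs) (Walk.nil : (rootlize G X r s).Walk s s)) = -1 := by
    rw [walkWeight_cons, walkWeight_nil,
      if_pos (show s(r, s) ∈ F ∪ {s(r, s)} from Or.inr rfl)]
    norm_num
  refine le_antisymm (hw0 ▸ distF_le_weight hp0) ?_
  refine le_distF ⟨_, hp0⟩ fun p hp => ?_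
  rw [(path_to_s hrs p hp hGV hXV hr hs).1]

include hGV hXV hr hs hrs hFE in
lemma dhat_X_eq {x : V} (hext : IsExtremeSet G F X) (hx : x ∈ X) :
    distF (rootlize G X r s) (F ∪ {s(r, s)}) r x = 0 := by
  have hxr : x ≠ r := fun h => hr (h ▸ hXV hx)
  have hxs : x ≠ s := fun h => hs (h ▸ hXV hx)
  refine le_antisymm ?_ ?_
  · have := dhat_le_of_walk hGV hXV hr hs hrs hFE hx Walk.nil Walk.IsPath.nil
    rwa [walkWeight_nil] at this
  · obtain ⟨p, hp, _, _, _⟩ :=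
      build_path hGV hXV hr hs hrs hFE hx (Walk.nil : G.Walk x x) Walk.IsPath.nil
    refine le_distF ⟨p, hp⟩ fun p' hp' => ?_
    obtain ⟨x₀, hx₀, q, hq, _, hw⟩ := decomp_path hGV hXV hr hs hrs hFE hxr hxs p' hp'
    rw [hw]
    exact le_trans (hext x₀ hx₀ x hx) (distF_le_weight hq)

include hGV hXV hr hs hrs hFE in
lemma dhat_D_lt {Vg' : Set V} {y : V} (hy : y ∈ Dset G F Vg' X) :
    distF (rootlize G X r s) (F ∪ {s(r, s)}) r y < 0 := by
  obtain ⟨hyV, hyX, x, hx, hd⟩ := hy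
  have hne : ∃ q : G.Walk x y, q.IsPath := by
    by_contra h
    rw [distF_eq_zero_of_no_path h] at hd
    omega
  obtain ⟨q, hq, hwq⟩ := distF_spec hne
  calc distF (rootlize G X r s) (F ∪ {s(r, s)}) r y ≤ walkWeight F q :=
        dhat_le_of_walk hGV hXV hr hs hrs hFE hx q hq
    _ = distF G F x y := hwq
    _ < 0 := hd

lemma extreme_insert {y : V} (hext : IsExtremeSet G F X)
    (hnD : ∀ x ∈ X, 0 ≤ distF G F x y) :
    IsExtremeSet G F (insert y X) := by
  intro a ha b hb
  rcases Set.mem_insert_iff.1 ha with ha' | ha'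
  · rcases Set.mem_insert_iff.1 hb with hb' | hb'
    · subst ha'; subst hb'; exact le_of_eq distF_self.symm
    · subst ha'; rw [distF_symm]; exact hnD b hb'
  · rcases Set.mem_insert_iff.1 hb with hb' | hb'
    · subst hb'; exact hnD a ha'
    · exact hext a ha' b hb' 

include hGV hXV hr hs hrs hFE in
lemma dhat_C_ge_one {A B : Set V} {y : V}
    (hbip : IsBipartitionOn G Vg A B) (hX : MaxBipExtreme G F A B X)
    (hyV : y ∈ Vg) (hyX : y ∉ X) (hyD : y ∉ Dset G F Vg X)
    (hreach : ∃ p : (rootlize G X r s).Walk r y, p.IsPath) :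
    1 ≤ distF (rootlize G X r s) (F ∪ {s(r, s)}) r y := by
  have hyr : y ≠ r := fun h => hr (h ▸ hyV)
  have hys : y ≠ s := fun h => hs (h ▸ hyV)
  have hnD : ∀ x ∈ X, 0 ≤ distF G F x y := by
    intro x hx
    by_contra h
    exact hyD ⟨hyV, hyX, x, hx, by omega⟩
  refine le_distF hreach fun p hp => ?_
  obtain ⟨x₀, hx₀, q, hq, _, hw⟩ := decomp_path hGV hXV hr hs hrs hFE hyr hys p hp
  rw [hw]
  have h0 : 0 ≤ walkWeight F q := le_trans (hnD x₀ hx₀) (distF_le_weight hq)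
  rcases eq_or_lt_of_le h0 with heq | h1
  · exfalso
    have hyAB : y ∈ A ∪ B := hbip.1.symm ▸ hyV
    have hsame : (y ∈ A ∧ X ⊆ A) ∨ (y ∈ B ∧ X ⊆ B) → False := by
      rintro (⟨hyA, hXA⟩ | ⟨hyB, hXB⟩)
      · apply hyX
        have hmax := hX.2.2 (insert y X) (extreme_insert hX.1 hnD)
          (Or.inl (Set.insert_subset hyA hXA)) (Set.subset_insert y X)
        rw [← hmax]; exact Set.mem_insert y X
      · apply hyX
        have hmax := hX.2.2 (insert y X) (extreme_insert hX.1 hnD)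
          (Or.inr (Set.insert_subset hyB hXB)) (Set.subset_insert y X)
        rw [← hmax]; exact Set.mem_insert y X
    rcases hX.2.1 with hXA | hXB
    · rcases hyAB with hyA | hyB
      · exact hsame (Or.inl ⟨hyA, hXA⟩)
      · exact walkWeight_ne_zero_of_odd
          ((bip_parity hbip.2.1 hbip.2.2 q).2 (Or.inl ⟨hXA hx₀, hyB⟩)) heq.symm
    · rcases hyAB with hyA | hyB
      · exact walkWeight_ne_zero_of_odd
          ((bip_parity hbip.2.1 hbip.2.2 q).2 (Or.inr ⟨hXB hx₀, hyA⟩)) heq.symm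
      · exact hsame (Or.inr ⟨hyB, hXB⟩)
  · omega

include hGV hXV hr hs hrs hFE in
lemma dhat_step {T : Set V} (hFm : IsMinJoin G T F) {g b : V} (hadj : G.Adj g b)
    (hreach : ∃ M : (rootlize G X r s).Walk r g, M.IsPath) :
    distF (rootlize G X r s) (F ∪ {s(r, s)}) r b ≤
      distF (rootlize G X r s) (F ∪ {s(r, s)}) r g + 1 := by
  have hgV : g ∈ Vg := (hGV _ _ hadj).1
  obtain ⟨M, hM, hwM⟩ := distF_spec hreach
  have hgr : g ≠ r := fun h => hr (h ▸ hgV)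
  have hgs : g ≠ s := fun h => hs (h ▸ hgV)
  obtain ⟨x₀, hx₀, q, hq, hsup, hw⟩ := decomp_path hGV hXV hr hs hrs hFE hgr hgs M hM
  have hwq : walkWeight F q = distF (rootlize G X r s) (F ∪ {s(r, s)}) r g := by
    rw [← hw, hwM]
  by_cases hbq : b ∈ q.support
  · have hpre : (q.takeUntil b hbq).IsPath := hq.takeUntil hbq
    have hsufpath : (q.dropUntil b hbq).IsPath := hq.dropUntil hbq
    have hwsplit : walkWeight F (q.takeUntil b hbq) + walkWeight F (q.dropUntil b hbq) =
        walkWeight F q := by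
      rw [← walkWeight_append, q.take_spec hbq]
    have hdb := dhat_le_of_walk hGV hXV hr hs hrs hFE hx₀ (q.takeUntil b hbq) hpre
    have hsufge : (-1 : ℤ) ≤ walkWeight F (q.dropUntil b hbq) := by
      by_cases hein : s(g, b) ∈ (q.dropUntil b hbq).edges
      · rw [mem_ends_edge_eq (q.dropUntil b hbq) hsufpath hein]
        split_ifs <;> omega
      · have hcy := minjoin_cycle hFm (q.dropUntil b hbq) hsufpath hadj hein
        split_ifs at hcy <;> omega
    omega
  · have hrevp : (Walk.cons hadj.symm q.reverse).IsPath := by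
      rw [Walk.cons_isPath_iff]
      refine ⟨hq.reverse, ?_⟩
      rwa [Walk.support_reverse, List.mem_reverse]
    have hconc : (q.concat hadj).IsPath := by
      rw [← Walk.isPath_reverse_iff, Walk.reverse_concat]
      exact hrevp
    have hwconc : walkWeight F (q.concat hadj) =
        walkWeight F q + (if s(g, b) ∈ F then (-1 : ℤ) else 1) := by
      rw [Walk.concat_eq_append, walkWeight_append, walkWeight_cons, walkWeight_nil]
      ring
    have hdb := dhat_le_of_walk hGV hXV hr hs hrs hFE hx₀ (q.concat hadj) hconc
    rw [hwconc] at hdb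
    split_ifs at hdb <;> omega

include hGV hr hs in
lemma hat_adj_Vg {u v : V} (h : (rootlize G X r s).Adj u v) (hu : u ∈ Vg) (hv : v ∈ Vg) :
    G.Adj u v := by
  rcases hat_adj_elim hGV hr hs h with hG | ⟨rfl, -⟩ | ⟨rfl, -⟩ | ⟨rfl, -⟩ | ⟨rfl, -⟩
  · exact hG
  · exact absurd hu hr
  · exact absurd hu hs
  · exact absurd hu hs
  · exact absurd hv hs

include hGV hXV hr hs hrs hFE in
lemma reach_in_U {T A B : Set V} (hFm : IsMinJoin G T F)
    (hbip : IsBipartitionOn G Vg A B) (hX : MaxBipExtreme G F A B X) :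
    ∀ n : ℕ, ∀ y : V, ∀ p : (rootlize G X r s).Walk r y, p.IsPath → p.length ≤ n →
      walkWeight (F ∪ {s(r, s)}) p = distF (rootlize G X r s) (F ∪ {s(r, s)}) r y →
      distF (rootlize G X r s) (F ∪ {s(r, s)}) r y ≤ 0 →
      (gRestrict (rootlize G X r s)
        {z | distF (rootlize G X r s) (F ∪ {s(r, s)}) r z ≤ 0}).Reachable r y := by
  intro n
  induction n with
  | zero =>
    intro y p hp hlen _ _
    have h0 : p.length = 0 := Nat.le_zero.1 hlen
    have : r = y := Walk.eq_of_length_eq_zero h0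
    subst this
    exact Reachable.refl _
  | succ n ih =>
    intro y p hp hlen hmin hle
    by_cases hall : ∀ z ∈ p.support, distF (rootlize G X r s) (F ∪ {s(r, s)}) r z ≤ 0
    · exact reachable_restrict p hall
    · push_neg at hall
      obtain ⟨z0, hz0, hz0'⟩ := hall
      have hdr : distF (rootlize G X r s) (F ∪ {s(r, s)}) r r = 0 := distF_self
      have hds : distF (rootlize G X r s) (F ∪ {s(r, s)}) r s = -1 :=
        dhat_s_eq hGV hXV hr hs hrs hFE
      have hyr : y ≠ r := by
        intro h
        have hp2 : (p.copy rfl h).IsPath := by rwa [Walk.isPath_copy]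
        have hnil := Walk.isPath_iff_eq_nil.1 hp2
        have hsupp2 : p.support = [r] := by
          have h6 := congrArg Walk.support hnil
          rwa [Walk.support_copy, Walk.support_nil] at h6
        rw [hsupp2, List.mem_singleton] at hz0
        rw [hz0] at hz0'
        omega
      have hys : y ≠ s := by
        intro h
        obtain ⟨-, hsupp⟩ := path_to_s (F := F) hrs (p.copy rfl h) (by rwa [Walk.isPath_copy])
          hGV hXV hr hs
        have hsupp2 : p.support = [r, s] := by rwa [Walk.support_copy] at hsupp
        rw [hsupp2] at hz0
        simp only [List.mem_cons, List.mem_singleton, List.not_mem_nil, or_false] at hz0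
        rcases hz0 with rfl | rfl <;> omega
      obtain ⟨x₀, hx₀, q, hq, hsup, hwq⟩ := decomp_path hGV hXV hr hs hrs hFE hyr hys p hp
      have hLne : p.support ≠ [] := p.support_ne_nil
      have hlast : distF (rootlize G X r s) (F ∪ {s(r, s)}) r (p.support.getLast hLne) ≤ 0 := by
        rw [p.getLast_support]; exact hle
      obtain ⟨L₁, bb, g, L₂, heq, hbP, hgP⟩ :=
        exists_crossing (P := fun z =>
            distF (rootlize G X r s) (F ∪ {s(r, s)}) r z ≤ 0)
          p.support hLne hlast ⟨z0, hz0, not_le.2 hz0'⟩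
      have hbgt : 0 < distF (rootlize G X r s) (F ∪ {s(r, s)}) r bb := by
        push_neg at hbP; exact hbP
      rw [hsup] at heq
      rcases L₁ with _ | ⟨c1, L₁'⟩
      · rw [List.nil_append] at heq
        obtain ⟨h1, -⟩ := List.cons_eq_cons.1 heq
        rw [← h1] at hbgt; omega
      · rw [List.cons_append] at heq
        obtain ⟨h1, heq⟩ := List.cons_eq_cons.1 heq
        rcases L₁' with _ | ⟨c2, L₁''⟩
        · rw [List.nil_append] at heq
          obtain ⟨h2, -⟩ := List.cons_eq_cons.1 heq
          rw [← h2] at hbgt; omega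
        · rw [List.cons_append] at heq
          obtain ⟨h2, hq2⟩ := List.cons_eq_cons.1 heq
          have hbmem : bb ∈ q.support := by rw [hq2]; simp
          have hgmem : g ∈ q.support := by rw [hq2]; simp
          have hbVg : bb ∈ Vg := walk_support_Vg hGV q (hXV hx₀) bb hbmem
          have hgVg : g ∈ Vg := walk_support_Vg hGV q (hXV hx₀) g hgmem
          have hch := p.isChain_adj_support
          rw [hsup, hq2] at hch
          have hadjbg : (rootlize G X r s).Adj bb g := by
            have hch2 : List.Chain' (rootlize G X r s).Adj
                ((r :: s :: L₁'') ++ bb :: g :: L₂) := by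
              simpa only [List.cons_append, List.Chain'] using hch
            exact chain'_mid _ _ _ _ hch2
          have hadjG : G.Adj bb g := hat_adj_Vg hGV hr hs hadjbg hbVg hgVg
          have hgsupP : g ∈ p.support := by rw [hsup, hq2]; simp
          have hreachg : ∃ M : (rootlize G X r s).Walk r g, M.IsPath :=
            ⟨p.takeUntil g hgsupP, hp.takeUntil _⟩
          have hstep := dhat_step hGV hXV hr hs hrs hFE hFm hadjG.symm hreachg
          have hg0 : distF (rootlize G X r s) (F ∪ {s(r, s)}) r g = 0 := by omega
          have hgX : g ∈ X := by
            by_contra hgX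
            by_cases hgD : g ∈ Dset G F Vg X
            · have := dhat_D_lt hGV hXV hr hs hrs hFE hgD; omega
            · have := dhat_C_ge_one hGV hXV hr hs hrs hFE hbip hX hgVg hgX hgD hreachg
              omega
          have hgne : g ≠ x₀ := by
            rintro rfl
            have hnd : q.support.Nodup := hq.support_nodup
            rw [hq2] at hnd
            have h0 := q.support_eq_cons
            rw [hq2] at h0
            cases L₁'' with
            | nil =>
              rw [List.nil_append] at h0
              obtain ⟨h3, -⟩ := List.cons_eq_cons.1 h0
              rw [h3] at hbgt; omega
            | cons c3 L₃ =>
              rw [List.cons_append] at h0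
              obtain ⟨h3, -⟩ := List.cons_eq_cons.1 h0
              have := (List.nodup_append.1 hnd).2.2
              exact this c3 List.mem_cons_self
                g (List.mem_cons_of_mem _ List.mem_cons_self) h3
          have hsufp : (q.dropUntil g hgmem).IsPath := hq.dropUntil _
          have hprep : (q.takeUntil g hgmem).IsPath := hq.takeUntil _
          have hwsplit : walkWeight F (q.takeUntil g hgmem) +
              walkWeight F (q.dropUntil g hgmem) = walkWeight F q := by
            rw [← walkWeight_append, q.take_spec]
          have hpre0 : 0 ≤ walkWeight F (q.takeUntil g hgmem) := by
            have := dhat_le_of_walk hGV hXV hr hs hrs hFE hx₀ (q.takeUntil g hgmem) hprep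
            omega
          obtain ⟨p', hp', hsup', hw', hlen'⟩ :=
            build_path hGV hXV hr hs hrs hFE hgX (q.dropUntil g hgmem) hsufp
          have hd1 : distF (rootlize G X r s) (F ∪ {s(r, s)}) r y ≤ walkWeight (F ∪ {s(r, s)}) p' :=
            distF_le_weight hp'
          have hwq' : walkWeight F q = distF (rootlize G X r s) (F ∪ {s(r, s)}) r y := by
            rw [← hwq, hmin]
          have hmin' : walkWeight (F ∪ {s(r, s)}) p' =
              distF (rootlize G X r s) (F ∪ {s(r, s)}) r y := by omega
          have hql : (q.takeUntil g hgmem).length + (q.dropUntil g hgmem).length = q.length := by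
            rw [← Walk.length_append, q.take_spec]
          have hplen : p.length = q.length + 2 := by
            have h1 := Walk.length_support p
            rw [hsup] at h1
            rw [List.length_cons, List.length_cons, Walk.length_support] at h1
            omega
          have hprelen : 1 ≤ (q.takeUntil g hgmem).length := by
            by_contra h
            push_neg at h
            exact hgne (Walk.eq_of_length_eq_zero (p := q.takeUntil g hgmem) (by omega)).symm
          have hlength : p'.length ≤ n := by omega
          exact ih y p' hp' hlength hmin' hle

end Ctx
end Stmt15

/-- for a maximal bipartitic extreme set `X` of a bipartite graft and its
rootlization with mount `X`, root `r` and attachment `s`, the set `X̂ ∪ D̂_X` (where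
`X̂ = X ∪ {r}` and `D̂_X = D_X ∪ {s}`) induces the initial component of `r` in `(Ĝ, T̂)`,
and `A(r) = X̂` and `D(r) = D̂_X`. -/
theorem stmt_15 [Fintype V] (G : SimpleGraph V) (Vg T A B X : Set V)
    (F : Set (Sym2 V)) (r s : V)
    (hGV : ∀ v w : V, G.Adj v w → v ∈ Vg ∧ w ∈ Vg)
    (hT : T ⊆ Vg) (hGT : IsGraft G T)
    (hbip : IsBipartitionOn G Vg A B)
    (hF : IsMinJoin G T F) (hXV : X ⊆ Vg) (hX : MaxBipExtreme G F A B X)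
    (hr : r ∉ Vg) (hs : s ∉ Vg) (hrs : r ≠ s) :
    initComp (rootlize G X r s) (F ∪ {s(r, s)}) r = (X ∪ {r}) ∪ (Dset G F Vg X ∪ {s}) ∧
    {x ∈ initComp (rootlize G X r s) (F ∪ {s(r, s)}) r |
      distF (rootlize G X r s) (F ∪ {s(r, s)}) r x = 0} = X ∪ {r} ∧
    {x ∈ initComp (rootlize G X r s) (F ∪ {s(r, s)}) r |
      distF (rootlize G X r s) (F ∪ {s(r, s)}) r x < 0} = Dset G F Vg X ∪ {s} := by
  classical
  have hFE : F ⊆ G.edgeSet := hF.1.1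
  have hdr : distF (rootlize G X r s) (F ∪ {s(r, s)}) r r = 0 := Stmt15.distF_self
  have hds : distF (rootlize G X r s) (F ∪ {s(r, s)}) r s = -1 :=
    Stmt15.dhat_s_eq hGV hXV hr hs hrs hFE
  have hdX : ∀ x ∈ X, distF (rootlize G X r s) (F ∪ {s(r, s)}) r x = 0 :=
    fun x hx => Stmt15.dhat_X_eq hGV hXV hr hs hrs hFE hX.1 hx
  have hdD : ∀ y ∈ Dset G F Vg X, distF (rootlize G X r s) (F ∪ {s(r, s)}) r y < 0 :=
    fun y hy => Stmt15.dhat_D_lt hGV hXV hr hs hrs hFE hy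
  have hrU : r ∈ {y | distF (rootlize G X r s) (F ∪ {s(r, s)}) r y ≤ 0} := by
    simp only [Set.mem_setOf_eq]; omega
  have hsU : s ∈ {y | distF (rootlize G X r s) (F ∪ {s(r, s)}) r y ≤ 0} := by
    simp only [Set.mem_setOf_eq]; omega
  have hsub : initComp (rootlize G X r s) (F ∪ {s(r, s)}) r ⊆
      (X ∪ {r}) ∪ (Dset G F Vg X ∪ {s}) := by
    intro z hz
    have hz' : (gRestrict (rootlize G X r s)
        {y | distF (rootlize G X r s) (F ∪ {s(r, s)}) r y ≤ 0}).Reachable r z := hz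
    by_cases hzr : z = r
    · exact Or.inl (Or.inr hzr)
    by_cases hzs : z = s
    · exact Or.inr (Or.inr hzs)
    have hzU : distF (rootlize G X r s) (F ∪ {s(r, s)}) r z ≤ 0 := by
      obtain ⟨w⟩ := hz'
      rcases Stmt15.restrict_end w with heq | hmem
      · exact absurd heq hzr
      · exact hmem
    have hreach : ∃ p : (rootlize G X r s).Walk r z, p.IsPath := by
      obtain ⟨w⟩ := hz'
      have hle2 : gRestrict (rootlize G X r s)
          {y | distF (rootlize G X r s) (F ∪ {s(r, s)}) r y ≤ 0} ≤ rootlize G X r s :=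
        fun {_ _} h => h.1
      exact ⟨((w.mapLe hle2).toPath).1, ((w.mapLe hle2).toPath).2⟩
    obtain ⟨p, hp⟩ := hreach
    have hzVg : z ∈ Vg := by
      obtain ⟨x₀, hx₀, q, hq, -, -⟩ :=
        Stmt15.decomp_path hGV hXV hr hs hrs hFE hzr hzs p hp
      exact Stmt15.walk_support_Vg hGV q (hXV hx₀) z q.end_mem_support
    by_cases hzX : z ∈ X
    · exact Or.inl (Or.inl hzX)
    by_cases hzD : z ∈ Dset G F Vg X
    · exact Or.inr (Or.inl hzD)
    have := Stmt15.dhat_C_ge_one hGV hXV hr hs hrs hFE hbip hX hzVg hzX hzD ⟨p, hp⟩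
    omega
  have hsup2 : (X ∪ {r}) ∪ (Dset G F Vg X ∪ {s}) ⊆
      initComp (rootlize G X r s) (F ∪ {s(r, s)}) r := by
    intro z hz
    rcases hz with (hzX | hzr) | (hzD | hzs)
    · have hxU : z ∈ {y | distF (rootlize G X r s) (F ∪ {s(r, s)}) r y ≤ 0} := by
        simp only [Set.mem_setOf_eq]
        rw [hdX z hzX]
      have h1 : (gRestrict (rootlize G X r s)
          {y | distF (rootlize G X r s) (F ∪ {s(r, s)}) r y ≤ 0}).Adj r s :=
        ⟨Stmt15.hat_adj_rs hrs, hrU, hsU⟩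
      have h2 : (gRestrict (rootlize G X r s)
          {y | distF (rootlize G X r s) (F ∪ {s(r, s)}) r y ≤ 0}).Adj s z :=
        ⟨Stmt15.hat_adj_sx hXV hs hzX, hsU, hxU⟩
      exact h1.reachable.trans h2.reachable
    · rw [Set.mem_singleton_iff] at hzr
      rw [hzr]
      exact SimpleGraph.Reachable.refl _
    · obtain ⟨hyV, hyX, x, hx, hd⟩ := hzD
      have hne : ∃ q : G.Walk x z, q.IsPath := by
        by_contra h
        rw [Stmt15.distF_eq_zero_of_no_path h] at hd
        omega
      obtain ⟨q, hq, hwq⟩ := Stmt15.distF_spec (F := F) hne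
      obtain ⟨p0, hp0, -, -, -⟩ := Stmt15.build_path hGV hXV hr hs hrs hFE hx q hq
      obtain ⟨pm, hpm, hwm⟩ := Stmt15.distF_spec ⟨p0, hp0⟩
      have hled : distF (rootlize G X r s) (F ∪ {s(r, s)}) r z ≤ 0 :=
        le_of_lt (hdD z ⟨hyV, hyX, x, hx, hd⟩)
      exact Stmt15.reach_in_U hGV hXV hr hs hrs hFE hF hbip hX pm.length z pm hpm
        le_rfl hwm hled
    · rw [Set.mem_singleton_iff] at hzs
      rw [hzs]
      have h1 : (gRestrict (rootlize G X r s)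
          {y | distF (rootlize G X r s) (F ∪ {s(r, s)}) r y ≤ 0}).Adj r s :=
        ⟨Stmt15.hat_adj_rs hrs, hrU, hsU⟩
      exact h1.reachable
  have hmain : initComp (rootlize G X r s) (F ∪ {s(r, s)}) r =
      (X ∪ {r}) ∪ (Dset G F Vg X ∪ {s}) := Set.Subset.antisymm hsub hsup2
  refine ⟨hmain, ?_, ?_⟩
  · ext z
    simp only [Set.mem_sep_iff, Set.mem_union, Set.mem_singleton_iff]
    constructor
    · rintro ⟨hzI, hz0⟩
      rcases (hmain ▸ hzI : z ∈ (X ∪ {r}) ∪ (Dset G F Vg X ∪ {s})) with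
        (h | h) | (h | h)
      · exact Or.inl h
      · exact Or.inr h
      · exact absurd hz0 (by have := hdD z h; omega)
      · exact absurd (h ▸ hz0) (by omega)
    · rintro (hzX | hzr)
      · exact ⟨hsup2 (Or.inl (Or.inl hzX)), hdX z hzX⟩
      · exact ⟨hsup2 (Or.inl (Or.inr hzr)), by rw [hzr]; exact hdr⟩
  · ext z
    simp only [Set.mem_sep_iff, Set.mem_union, Set.mem_singleton_iff]
    constructor
    · rintro ⟨hzI, hz0⟩
      rcases (hmain ▸ hzI : z ∈ (X ∪ {r}) ∪ (Dset G F Vg X ∪ {s})) with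
        (h | h) | (h | h)
      · exact absurd hz0 (by have := hdX z h; omega)
      · exact absurd (h ▸ hz0) (by omega)
      · exact Or.inl h
      · exact Or.inr h
    · rintro (hzD | hzs)
      · exact ⟨hsup2 (Or.inr (Or.inl hzD)), hdD z hzD⟩
      · exact ⟨hsup2 (Or.inr (Or.inr hzs)), by rw [hzs]; omega⟩
end
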